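/- arXiv:1702.06314 — 2 statements merged into one kernel-verified Lean document; each statement's English description precedes it below -/
import Mathlib

section
/- Let Σ = (X, 𝒟, φ) be a system and let A ⊆ X be nonempty, bounded and closed. The following statements are equivalent: (i) A is uniformly globally asymptotically stable; (ii) Σ is robustly forward complete and A is a uniformly globally attractive robustly invariant set; (iii) Σ is robustly forward complete and A is uniformly (locally) stable and uniformly globally weakly attractive; (iv) A is uniformly globally stable and uniformly globally weakly attractive; (v) A is uniformly globally stable and uniformly globally attractive. -/
open scoped NNReal ENNReal
open Filter Topology Bornology

noncomputable section

/-- Functions of class 𝒦: continuous, strictly increasing, vanishing at zero. -/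
def ClassK (γ : ℝ≥0 → ℝ≥0) : Prop :=
  Continuous γ ∧ StrictMono γ ∧ γ 0 = 0

/-- Functions of class 𝒦∞: class 𝒦 and unbounded. -/
def ClassKinf (γ : ℝ≥0 → ℝ≥0) : Prop :=
  ClassK γ ∧ ∀ M : ℝ≥0, ∃ r : ℝ≥0, M < γ r

/-- Functions of class 𝒦ℒ. -/
def ClassKL (β : ℝ≥0 → ℝ≥0 → ℝ≥0) : Prop :=
  Continuous (fun p : ℝ≥0 × ℝ≥0 => β p.1 p.2) ∧
  (∀ t : ℝ≥0, ClassK fun r => β r t) ∧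
  ∀ r : ℝ≥0, 0 < r →
    StrictAnti (fun t => β r t) ∧ Tendsto (fun t => β r t) atTop (𝓝 0)

/-- Distance of a point to a set, `‖x‖_A`. -/
def dA {X : Type*} [NormedAddCommGroup X] (A : Set X) (x : X) : ℝ≥0 :=
  (Metric.infDist x A).toNNReal

/-- The open ε-neighborhood `B_ε(A)` of a set. -/
def ballSet {X : Type*} [NormedAddCommGroup X] (ε : ℝ≥0) (A : Set X) : Set X :=
  {x | dA A x < ε}

/-- A (time-invariant) control system with disturbances. -/
structure System (X : Type*) [NormedAddCommGroup X] [NormedSpace ℝ X]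
    (W : Type*) [NormedAddCommGroup W] [NormedSpace ℝ W] where
  /-- the set of disturbance values -/
  D : Set W
  D_nonempty : D.Nonempty
  /-- the space of disturbances -/
  Dist : Set (ℝ≥0 → W)
  dist_mem : ∀ d ∈ Dist, ∀ t : ℝ≥0, d t ∈ D
  /-- axiom of shift invariance -/
  shift_invariant : ∀ d ∈ Dist, ∀ τ : ℝ≥0, (fun t => d (t + τ)) ∈ Dist
  /-- axiom of concatenation -/
  concat_mem : ∀ d₁ ∈ Dist, ∀ d₂ ∈ Dist, ∀ t : ℝ≥0, 0 < t →
      (fun s => if s ≤ t then d₁ s else d₂ (s - t)) ∈ Dist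
  /-- the transition map -/
  φ : ℝ≥0 → X → (ℝ≥0 → W) → X
  identity : ∀ (x : X), ∀ d ∈ Dist, φ 0 x d = x
  causality : ∀ (t : ℝ≥0) (x : X), ∀ d ∈ Dist, ∀ d' ∈ Dist,
      (∀ s ≤ t, d s = d' s) → φ t x d = φ t x d'
  cont : ∀ (x : X), ∀ d ∈ Dist, Continuous fun t : ℝ≥0 => φ t x d
  cocycle : ∀ (t h : ℝ≥0) (x : X), ∀ d ∈ Dist,
      φ h (φ t x d) (fun s => d (t + s)) = φ (t + h) x d

namespace System

variable {X : Type*} [NormedAddCommGroup X] [NormedSpace ℝ X]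
variable {W : Type*} [NormedAddCommGroup W] [NormedSpace ℝ W]
variable (S : System X W)

/-- Reachability set within time `T`. -/
def RT (T : ℝ≥0) (B : Set X) : Set X :=
  {y | ∃ t ≤ T, ∃ d ∈ S.Dist, ∃ x ∈ B, y = S.φ t x d}

/-- Reachability set. -/
def R (B : Set X) : Set X :=
  {y | ∃ t : ℝ≥0, ∃ d ∈ S.Dist, ∃ x ∈ B, y = S.φ t x d}

/-- Robust forward completeness. -/
def RFC : Prop :=
  ∀ C : ℝ≥0, 0 < C → ∀ τ : ℝ≥0, 0 < τ →
    IsBounded (S.RT τ {x : X | ‖x‖₊ ≤ C})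

/-- Invariance of a set. -/
def Invariant (A : Set X) : Prop := S.R A ⊆ A

/-- Robust invariance of a set. -/
def RobustlyInvariant (A : Set X) : Prop :=
  S.Invariant A ∧
  ∀ ε : ℝ≥0, 0 < ε → ∀ h : ℝ≥0, 0 < h → ∃ δ : ℝ≥0, 0 < δ ∧
    ∀ t : ℝ≥0, t ≤ h → ∀ x : X, dA A x ≤ δ → ∀ d ∈ S.Dist, dA A (S.φ t x d) ≤ ε

/-- Lagrange stability of a set. -/
def LagrangeStable (A : Set X) : Prop :=
  ∃ σ : ℝ≥0 → ℝ≥0, ClassKinf σ ∧ ∃ c : ℝ≥0, 0 < c ∧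
    ∀ (x : X), ∀ d ∈ S.Dist, ∀ t : ℝ≥0, dA A (S.φ t x d) ≤ σ (dA A x) + c

/-- Uniform (local) stability of a set. -/
def ULS (A : Set X) : Prop :=
  ∀ ε : ℝ≥0, 0 < ε → ∃ δ : ℝ≥0, 0 < δ ∧
    ∀ x : X, dA A x ≤ δ → ∀ d ∈ S.Dist, ∀ t : ℝ≥0, dA A (S.φ t x d) ≤ ε

/-- Uniform global stability of a set. -/
def UGS (A : Set X) : Prop :=
  ∃ σ : ℝ≥0 → ℝ≥0, ClassKinf σ ∧
    ∀ (x : X), ∀ d ∈ S.Dist, ∀ t : ℝ≥0, dA A (S.φ t x d) ≤ σ (dA A x)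

/-- Uniform global asymptotic stability of a set. -/
def UGAS (A : Set X) : Prop :=
  ∃ β : ℝ≥0 → ℝ≥0 → ℝ≥0, ClassKL β ∧
    ∀ (x : X), ∀ d ∈ S.Dist, ∀ t : ℝ≥0, dA A (S.φ t x d) ≤ β (dA A x) t

/-- Practical uniform global asymptotic stability of a set. -/
def PUGASSet (A : Set X) : Prop :=
  ∃ β : ℝ≥0 → ℝ≥0 → ℝ≥0, ClassKL β ∧ ∃ c : ℝ≥0, 0 < c ∧
    ∀ (x : X), ∀ d ∈ S.Dist, ∀ t : ℝ≥0, dA A (S.φ t x d) ≤ β (dA A x) t + c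

/-- Global weak attractivity of a set. -/
def GWA (A : Set X) : Prop :=
  ∀ (x : X), ∀ d ∈ S.Dist, ∀ ε : ℝ≥0, 0 < ε → ∃ t : ℝ≥0, dA A (S.φ t x d) ≤ ε

/-- Uniform global weak attractivity of a set. -/
def UGWA (A : Set X) : Prop :=
  ∀ ε : ℝ≥0, 0 < ε → ∀ r : ℝ≥0, 0 < r → ∃ τ : ℝ≥0,
    ∀ x : X, dA A x ≤ r → ∀ d ∈ S.Dist, ∃ t ≤ τ, dA A (S.φ t x d) ≤ ε

/-- Uniform global attractivity of a set. -/
def UGATT (A : Set X) : Prop :=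
  ∀ ε : ℝ≥0, 0 < ε → ∀ r : ℝ≥0, 0 < r → ∃ τ : ℝ≥0,
    ∀ x : X, dA A x ≤ r → ∀ d ∈ S.Dist, ∀ t : ℝ≥0, τ ≤ t → dA A (S.φ t x d) ≤ ε

/-- Uniform ultimate boundedness of the system. -/
def UUB : Prop :=
  ∃ K : ℝ≥0, 0 < K ∧ ∀ r : ℝ≥0, 0 < r → ∃ T : ℝ≥0,
    ∀ x : X, ‖x‖₊ ≤ r → ∀ d ∈ S.Dist, ∀ t : ℝ≥0, T ≤ t → ‖S.φ t x d‖₊ ≤ K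

/-- Global recurrence of a set. -/
def GloballyRecurrent (A : Set X) : Prop :=
  ∀ (x : X), ∀ d ∈ S.Dist, ∃ t : ℝ≥0, S.φ t x d ∈ A

/-- Uniform global recurrence of a set. -/
def UniformlyGloballyRecurrent (A : Set X) : Prop :=
  ∀ R : ℝ≥0, 0 < R → ∃ τ : ℝ≥0,
    ∀ x : X, dA A x ≤ R → ∀ d ∈ S.Dist, ∃ t ≤ τ, S.φ t x d ∈ A

/-- The set `P₊(A) = ⋂_{ε>0} ℛ(B_ε(A))`. -/
def Pplus (A : Set X) : Set X := ⋂ (ε : ℝ≥0) (_ : 0 < ε), S.R (ballSet ε A)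

/-- Non-coercive Lyapunov function w.r.t. a bounded set `A`. -/
def NonCoerciveLyapunov (A : Set X) (V : X → ℝ) : Prop :=
  Continuous V ∧ (∀ x : X, 0 ≤ V x) ∧ (∀ x ∈ A, V x = 0) ∧
  (∃ ψ₂ : ℝ≥0 → ℝ≥0, ClassKinf ψ₂ ∧
    ∀ x ∉ A, 0 < V x ∧ V x ≤ (ψ₂ (dA A x) : ℝ)) ∧
  (∃ α : ℝ≥0 → ℝ≥0, ClassK α ∧ ∀ x ∉ A, ∀ d ∈ S.Dist,
    Filter.liminf (fun t : ℝ≥0 => (V (S.φ t x d) - V x) / (t : ℝ))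
      (𝓝[>] (0 : ℝ≥0)) ≤ -(α (dA A x) : ℝ))

/-- The system is Lagrange stable if some bounded nonempty set is Lagrange stable. -/
def SystemLagrangeStable : Prop :=
  ∃ A : Set X, A.Nonempty ∧ IsBounded A ∧ S.LagrangeStable A

/-- The system is pUGAS if some bounded nonempty set is pUGAS. -/
def SystemPUGAS : Prop :=
  ∃ A : Set X, A.Nonempty ∧ IsBounded A ∧ S.PUGASSet A

end System

/-! ### Auxiliary lemmas for stmt18 -/

section Stmt18Aux

open Metric Finset

variable {X : Type*} [NormedAddCommGroup X]

lemma aux_dA_coe (A : Set X) (x : X) : (dA A x : ℝ) = infDist x A :=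
  Real.coe_toNNReal _ infDist_nonneg

lemma aux_dA_le_iff {A : Set X} {x : X} {c : ℝ≥0} : dA A x ≤ c ↔ infDist x A ≤ c := by
  rw [← NNReal.coe_le_coe, aux_dA_coe]

lemma aux_dA_lt_iff {A : Set X} {x : X} {c : ℝ≥0} : (dA A x : ℝ) < c ↔ infDist x A < c := by
  rw [aux_dA_coe]

lemma aux_dA_of_mem {A : Set X} {x : X} (hx : x ∈ A) : dA A x = 0 := by
  unfold dA; rw [infDist_zero_of_mem hx]; simp

lemma aux_mem_of_dA {A : Set X} (hAc : IsClosed A) (hA : A.Nonempty) {x : X}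
    (h : dA A x = 0) : x ∈ A := by
  rw [hAc.mem_iff_infDist_zero hA]
  have h' : infDist x A ≤ 0 := by
    have := aux_dA_le_iff (A := A) (x := x) (c := 0)
    simpa using this.mp (le_of_eq h)
  exact le_antisymm h' infDist_nonneg

lemma aux_dA_le_norm {A : Set X} {a₀ : X} (ha₀ : a₀ ∈ A) {M : ℝ≥0}
    (hM : ∀ a ∈ A, ‖a‖ ≤ (M : ℝ)) (x : X) : dA A x ≤ ‖x‖₊ + M := by
  rw [aux_dA_le_iff]
  calc infDist x A ≤ dist x a₀ := infDist_le_dist_of_mem ha₀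
    _ ≤ ‖x‖ + ‖a₀‖ := by rw [dist_eq_norm]; exact norm_sub_le _ _
    _ ≤ ‖x‖₊ + M := by push_cast; exact add_le_add le_rfl (hM a₀ ha₀)

lemma aux_norm_le_dA {A : Set X} (hA : A.Nonempty) {M : ℝ≥0}
    (hM : ∀ a ∈ A, ‖a‖ ≤ (M : ℝ)) (x : X) : ‖x‖ ≤ (dA A x : ℝ) + 1 + M := by
  obtain ⟨a, haA, ha⟩ := (infDist_lt_iff hA).mp
    (show infDist x A < infDist x A + 1 by linarith)
  calc ‖x‖ ≤ dist x a + ‖a‖ := by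
        rw [dist_eq_norm]
        have := norm_sub_norm_le x a  -- ‖x‖ - ‖a‖ ≤ ‖x - a‖
        linarith [abs_le.mp (abs_norm_sub_norm_le x a)]
    _ ≤ (infDist x A + 1) + M := add_le_add ha.le (hM a haA)
    _ = (dA A x : ℝ) + 1 + M := by rw [aux_dA_coe]

lemma aux_classKinf_toNNReal {F : ℝ≥0 → ℝ} (hc : Continuous F) (hm : StrictMono F)
    (h0 : F 0 = 0) (hg : ∀ r : ℝ≥0, (r : ℝ) ≤ F r) :
    ClassKinf fun r => (F r).toNNReal := by
  have hnn : ∀ r, 0 ≤ F r := fun r => h0 ▸ hm.monotone (zero_le : (0:ℝ≥0) ≤ r)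
  refine ⟨⟨continuous_real_toNNReal.comp hc, ?_, by simp [h0]⟩, ?_⟩
  · intro a b hab
    exact (Real.toNNReal_lt_toNNReal_iff_of_nonneg (hnn a)).mpr (hm hab)
  · intro M
    refine ⟨M + 1, ?_⟩
    have h1 : ((M : ℝ≥0) + 1 : ℝ≥0) ≤ (F (M + 1)).toNNReal := by
      have h2 : (((M : ℝ≥0) + 1 : ℝ≥0) : ℝ) ≤ F (M + 1) := by
        calc (((M : ℝ≥0) + 1 : ℝ≥0) : ℝ) = ((M + 1 : ℝ≥0) : ℝ) := by push_cast; ring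
          _ ≤ F (M + 1) := hg _
      calc (M + 1 : ℝ≥0) = (((M + 1 : ℝ≥0) : ℝ)).toNNReal := (Real.toNNReal_coe).symm
        _ ≤ (F (M + 1)).toNNReal := Real.toNNReal_mono h2
    exact lt_of_lt_of_le (lt_add_one M) h1

lemma aux_classK_small {γ : ℝ≥0 → ℝ≥0} (hγ : Continuous γ) (h0 : γ 0 = 0)
    {ε : ℝ≥0} (hε : 0 < ε) : ∃ δ : ℝ≥0, 0 < δ ∧ γ δ ≤ ε := by
  have ht : Filter.Tendsto γ (𝓝 0) (𝓝 0) := by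
    simpa [h0] using hγ.tendsto 0
  have hev : ∀ᶠ x in 𝓝 (0 : ℝ≥0), γ x < ε :=
    ht.eventually (Filter.Tendsto.eventually_lt_const hε Filter.tendsto_id)
  obtain ⟨δ, hδ, hsub⟩ := NNReal.nhds_zero_basis.eventually_iff.mp hev
  refine ⟨δ / 2, ?_, ?_⟩
  · positivity
  · exact le_of_lt (hsub (Set.mem_Iio.mpr (NNReal.half_lt_self hδ.ne')))

lemma aux_classKL_toNNReal {B : ℝ≥0 → ℝ≥0 → ℝ}
    (hc : Continuous fun p : ℝ≥0 × ℝ≥0 => B p.1 p.2)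
    (hnn : ∀ r t, 0 ≤ B r t)
    (hK : ∀ t, StrictMono fun r => B r t) (h0 : ∀ t, B 0 t = 0)
    (hA : ∀ r, 0 < r → StrictAnti fun t => B r t)
    (hT : ∀ r, 0 < r → Filter.Tendsto (fun t => B r t) Filter.atTop (𝓝 0)) :
    ClassKL fun r t => (B r t).toNNReal := by
  refine ⟨continuous_real_toNNReal.comp hc, fun t => ⟨?_, ?_, by simp [h0 t]⟩, fun r hr => ⟨?_, ?_⟩⟩
  · exact continuous_real_toNNReal.comp
      (hc.comp (continuous_id.prodMk continuous_const))
  · intro a b hab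
    exact (Real.toNNReal_lt_toNNReal_iff_of_nonneg (hnn a t)).mpr (hK t hab)
  · intro a b hab
    exact (Real.toNNReal_lt_toNNReal_iff_of_nonneg (hnn r b)).mpr (hA r hr hab)
  · have := (continuous_real_toNNReal.tendsto 0).comp (hT r hr)
    simpa [Function.comp_def] using this

/-! clamp and big sums -/

noncomputable def clamp01 (x : ℝ) : ℝ := min 1 (max 0 x)

lemma clamp01_nonneg (x : ℝ) : 0 ≤ clamp01 x := le_min zero_le_one (le_max_left _ _)

lemma clamp01_le_one (x : ℝ) : clamp01 x ≤ 1 := min_le_left _ _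

lemma clamp01_mono : Monotone clamp01 :=
  fun _ _ h => min_le_min le_rfl (max_le_max le_rfl h)

lemma clamp01_continuous : Continuous clamp01 :=
  continuous_const.min (continuous_const.max continuous_id)

lemma clamp01_of_one_le {x : ℝ} (h : 1 ≤ x) : clamp01 x = 1 :=
  min_eq_left (le_max_of_le_right h)

lemma clamp01_of_nonpos {x : ℝ} (h : x ≤ 0) : clamp01 x = 0 := by
  unfold clamp01
  rw [max_eq_left h]
  exact min_eq_right zero_le_one

noncomputable def bigSum (v : ℕ → ℝ≥0 → ℝ) (r t : ℝ≥0) : ℝ :=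
  ∑ m ∈ Finset.range (Nat.floor r + 2), clamp01 ((r : ℝ) - m + 1) * v m t

lemma bigSum_eq (v : ℕ → ℝ≥0 → ℝ) {r : ℝ≥0} {N : ℕ} (hN : Nat.floor r + 2 ≤ N)
    (t : ℝ≥0) :
    bigSum v r t = ∑ m ∈ Finset.range N, clamp01 ((r : ℝ) - m + 1) * v m t := by
  refine Finset.sum_subset (Finset.range_subset_range.mpr hN) ?_
  intro m hm hm'
  simp only [Finset.mem_range, not_lt] at hm'
  have h1 : (r : ℝ) < Nat.floor r + 1 := Nat.lt_floor_add_one r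
  have h2 : ((Nat.floor r : ℕ) : ℝ) + 2 ≤ (m : ℝ) := by exact_mod_cast hm'
  have : (r : ℝ) - m + 1 ≤ 0 := by linarith
  rw [clamp01_of_nonpos this, zero_mul]

lemma bigSum_continuous {v : ℕ → ℝ≥0 → ℝ} (hv : ∀ m, Continuous (v m)) :
    Continuous fun p : ℝ≥0 × ℝ≥0 => bigSum v p.1 p.2 := by
  rw [continuous_iff_continuousAt]
  intro p
  set N := Nat.floor p.1 + 3 with hNdef
  have hcont : Continuous fun q : ℝ≥0 × ℝ≥0 =>
      ∑ m ∈ Finset.range N, clamp01 ((q.1 : ℝ) - m + 1) * v m q.2 := by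
    refine continuous_finset_sum _ fun m _ => ?_
    exact ((clamp01_continuous.comp
      (((NNReal.continuous_coe.comp continuous_fst).sub continuous_const).add
        continuous_const))).mul ((hv m).comp continuous_snd)
  have hU : {q : ℝ≥0 × ℝ≥0 | (q.1 : ℝ) < (Nat.floor p.1 : ℝ) + 2} ∈ 𝓝 p := by
    refine IsOpen.mem_nhds ?_ ?_
    · exact isOpen_lt (NNReal.continuous_coe.comp continuous_fst) continuous_const
    · have h := Nat.lt_floor_add_one p.1
      simp only [Set.mem_setOf_eq]
      have h' : (p.1 : ℝ) < ((Nat.floor p.1 : ℕ) : ℝ) + 1 := by exact_mod_cast h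
      linarith
  refine ContinuousAt.congr hcont.continuousAt ?_
  refine Filter.eventuallyEq_of_mem hU fun q hq => ?_
  simp only [Set.mem_setOf_eq] at hq
  have hfl : Nat.floor q.1 + 2 ≤ N := by
    have h1 : ((Nat.floor q.1 : ℕ) : ℝ) ≤ (q.1 : ℝ) := by
      have h0 : ((Nat.floor q.1 : ℕ) : ℝ≥0) ≤ q.1 := Nat.floor_le (zero_le : (0:ℝ≥0) ≤ q.1)
      exact_mod_cast h0
    have h2 : ((Nat.floor q.1 : ℕ) : ℝ) < (Nat.floor p.1 : ℝ) + 2 := lt_of_le_of_lt h1 hq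
    have h3 : Nat.floor q.1 < Nat.floor p.1 + 2 := by exact_mod_cast h2
    omega
  exact (bigSum_eq v hfl q.2).symm

lemma bigSum_nonneg {v : ℕ → ℝ≥0 → ℝ} (hv : ∀ m t, 0 ≤ v m t) (r t : ℝ≥0) :
    0 ≤ bigSum v r t :=
  Finset.sum_nonneg fun m _ => mul_nonneg (clamp01_nonneg _) (hv m t)

lemma bigSum_mono_r {v : ℕ → ℝ≥0 → ℝ} (hv : ∀ m t, 0 ≤ v m t) {r r' : ℝ≥0}
    (h : r ≤ r') (t : ℝ≥0) : bigSum v r t ≤ bigSum v r' t := by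
  rw [bigSum_eq v (N := Nat.floor r' + 2) (by
    have := Nat.floor_mono h; omega) t]
  refine Finset.sum_le_sum fun m _ => ?_
  refine mul_le_mul_of_nonneg_right (clamp01_mono ?_) (hv m t)
  have : (r : ℝ) ≤ (r' : ℝ) := by exact_mod_cast h
  linarith

lemma bigSum_anti_t {v : ℕ → ℝ≥0 → ℝ} (hanti : ∀ m, Antitone (v m)) {t t' : ℝ≥0}
    (h : t ≤ t') (r : ℝ≥0) : bigSum v r t' ≤ bigSum v r t :=
  Finset.sum_le_sum fun m _ =>
    mul_le_mul_of_nonneg_left (hanti m h) (clamp01_nonneg _)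

lemma le_bigSum {v : ℕ → ℝ≥0 → ℝ} (hv : ∀ m t, 0 ≤ v m t) (r t : ℝ≥0) :
    v (Nat.floor r) t ≤ bigSum v r t := by
  have hmem : Nat.floor r ∈ Finset.range (Nat.floor r + 2) :=
    Finset.mem_range.mpr (by omega)
  have hfl : ((Nat.floor r : ℕ) : ℝ) ≤ (r : ℝ) := by
    have h0 : ((Nat.floor r : ℕ) : ℝ≥0) ≤ r := Nat.floor_le (zero_le : (0:ℝ≥0) ≤ r)
    exact_mod_cast h0
  have h1 : clamp01 ((r : ℝ) - (Nat.floor r : ℕ) + 1) = 1 :=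
    clamp01_of_one_le (by linarith)
  have h2 := Finset.single_le_sum (f := fun m : ℕ => clamp01 ((r : ℝ) - m + 1) * v m t)
    (fun m _ => mul_nonneg (clamp01_nonneg _) (hv m t)) hmem
  rw [h1, one_mul] at h2
  exact h2

lemma bigSum_tendsto {v : ℕ → ℝ≥0 → ℝ} (r : ℝ≥0)
    (hv : ∀ m, Filter.Tendsto (v m) Filter.atTop (𝓝 0)) :
    Filter.Tendsto (fun t => bigSum v r t) Filter.atTop (𝓝 0) := by
  have : Filter.Tendsto
      (fun t => ∑ m ∈ Finset.range (Nat.floor r + 2),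
        clamp01 ((r : ℝ) - m + 1) * v m t) Filter.atTop (𝓝 0) := by
    have h0 : (0 : ℝ) = ∑ m ∈ Finset.range (Nat.floor r + 2),
        clamp01 ((r : ℝ) - m + 1) * 0 := by simp
    rw [h0]
    exact tendsto_finset_sum _ fun m _ => ((hv m).const_mul _)
  exact this

/-! ### exp-decay gadgets -/

noncomputable def ee (T t : ℝ≥0) : ℝ := min 1 (Real.exp ((T : ℝ) - t))

lemma ee_pos (T t : ℝ≥0) : 0 < ee T t := lt_min one_pos (Real.exp_pos _)

lemma ee_le_one (T t : ℝ≥0) : ee T t ≤ 1 := min_le_left _ _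

lemma ee_continuous (T : ℝ≥0) : Continuous (ee T) :=
  continuous_const.min (Real.continuous_exp.comp (continuous_const.sub NNReal.continuous_coe))

lemma ee_antitone (T : ℝ≥0) : Antitone (ee T) := by
  intro t t' h
  refine min_le_min le_rfl (Real.exp_le_exp.mpr ?_)
  have : (t : ℝ) ≤ (t' : ℝ) := by exact_mod_cast h
  linarith

lemma ee_eq_one {T t : ℝ≥0} (h : t ≤ T) : ee T t = 1 := by
  refine min_eq_left (Real.one_le_exp ?_)
  have : (t : ℝ) ≤ (T : ℝ) := by exact_mod_cast h
  linarith

lemma ee_tendsto (T : ℝ≥0) : Filter.Tendsto (ee T) Filter.atTop (𝓝 0) := by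
  have h1 : Filter.Tendsto (fun t : ℝ≥0 => (t : ℝ)) Filter.atTop Filter.atTop :=
    NNReal.tendsto_coe_atTop.mpr Filter.tendsto_id
  have h2 : Filter.Tendsto (fun t : ℝ≥0 => (T : ℝ) - (t : ℝ)) Filter.atTop Filter.atBot := by
    have h3 := Filter.tendsto_atBot_add_const_left _ (T : ℝ)
      (Filter.tendsto_neg_atBot_iff.mpr h1)
    simpa [sub_eq_add_neg] using h3
  have h3 : Filter.Tendsto (fun t : ℝ≥0 => Real.exp ((T : ℝ) - t)) Filter.atTop (𝓝 0) :=
    Real.tendsto_exp_atBot.comp h2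
  exact squeeze_zero (fun t => (ee_pos T t).le) (fun t => min_le_right _ _) h3

lemma aux_expneg_tendsto :
    Filter.Tendsto (fun t : ℝ≥0 => Real.exp (-(t : ℝ))) Filter.atTop (𝓝 0) := by
  have h1 : Filter.Tendsto (fun t : ℝ≥0 => (t : ℝ)) Filter.atTop Filter.atTop :=
    NNReal.tendsto_coe_atTop.mpr Filter.tendsto_id
  exact Real.tendsto_exp_atBot.comp (Filter.tendsto_neg_atBot_iff.mpr h1)

noncomputable def gfun (σR : ℕ → ℝ) (TT : ℕ → ℕ → ℝ≥0) (m : ℕ) (t : ℝ≥0) : ℝ :=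
  σR m * ee (TT 0 m) t + ∑' n : ℕ, (2 : ℝ)⁻¹ ^ n * ee (TT (n + 1) m) t

lemma gfun_summable (TT : ℕ → ℕ → ℝ≥0) (m : ℕ) (t : ℝ≥0) :
    Summable fun n : ℕ => (2 : ℝ)⁻¹ ^ n * ee (TT (n + 1) m) t := by
  refine Summable.of_nonneg_of_le
    (fun n => mul_nonneg (by positivity) (ee_pos _ _).le) (fun n => ?_)
    (summable_geometric_of_lt_one (r := (2:ℝ)⁻¹) (by norm_num) (by norm_num))
  calc (2 : ℝ)⁻¹ ^ n * ee (TT (n + 1) m) t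
      ≤ (2 : ℝ)⁻¹ ^ n * 1 := mul_le_mul_of_nonneg_left (ee_le_one _ _) (by positivity)
    _ = (2 : ℝ)⁻¹ ^ n := mul_one _

lemma gfun_nonneg {σR : ℕ → ℝ} (TT : ℕ → ℕ → ℝ≥0) {m : ℕ} (hσm : 0 ≤ σR m) (t : ℝ≥0) :
    0 ≤ gfun σR TT m t :=
  add_nonneg (mul_nonneg hσm (ee_pos _ _).le)
    (tsum_nonneg fun n => mul_nonneg (by positivity) (ee_pos _ _).le)

lemma gfun_continuous (σR : ℕ → ℝ) (TT : ℕ → ℕ → ℝ≥0) (m : ℕ) :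
    Continuous (gfun σR TT m) := by
  refine (continuous_const.mul (ee_continuous _)).add ?_
  refine continuous_tsum (fun n => continuous_const.mul (ee_continuous _))
    (summable_geometric_of_lt_one (r := (2:ℝ)⁻¹) (by norm_num) (by norm_num)) ?_
  intro n t
  rw [Real.norm_eq_abs, abs_of_nonneg (mul_nonneg (by positivity) (ee_pos _ _).le)]
  calc (2 : ℝ)⁻¹ ^ n * ee (TT (n + 1) m) t
      ≤ (2 : ℝ)⁻¹ ^ n * 1 := mul_le_mul_of_nonneg_left (ee_le_one _ _) (by positivity)
    _ = (2 : ℝ)⁻¹ ^ n := mul_one _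

lemma gfun_antitone {σR : ℕ → ℝ} (TT : ℕ → ℕ → ℝ≥0) {m : ℕ} (hσm : 0 ≤ σR m) :
    Antitone (gfun σR TT m) := by
  intro t t' h
  refine add_le_add (mul_le_mul_of_nonneg_left (ee_antitone _ h) hσm) ?_
  exact Summable.tsum_le_tsum
    (fun n => mul_le_mul_of_nonneg_left (ee_antitone _ h) (by positivity))
    (gfun_summable TT m t') (gfun_summable TT m t)

lemma gfun_ge_sigma {σR : ℕ → ℝ} {TT : ℕ → ℕ → ℝ≥0} {m : ℕ} {t : ℝ≥0}
    (h : t ≤ TT 0 m) : σR m ≤ gfun σR TT m t := by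
  have h1 : σR m * ee (TT 0 m) t = σR m := by rw [ee_eq_one h, mul_one]
  have h2 : 0 ≤ ∑' n : ℕ, (2 : ℝ)⁻¹ ^ n * ee (TT (n + 1) m) t :=
    tsum_nonneg fun n => mul_nonneg (by positivity) (ee_pos _ _).le
  unfold gfun
  linarith

lemma gfun_ge_pow {σR : ℕ → ℝ} {TT : ℕ → ℕ → ℝ≥0} {m : ℕ} {t : ℝ≥0} (hσm : 0 ≤ σR m)
    (n₀ : ℕ) (h : t ≤ TT (n₀ + 1) m) : (2 : ℝ)⁻¹ ^ n₀ ≤ gfun σR TT m t := by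
  have h1 : (2 : ℝ)⁻¹ ^ n₀ * ee (TT (n₀ + 1) m) t = (2 : ℝ)⁻¹ ^ n₀ := by
    rw [ee_eq_one h, mul_one]
  have h2 : (2 : ℝ)⁻¹ ^ n₀ * ee (TT (n₀ + 1) m) t
      ≤ ∑' n : ℕ, (2 : ℝ)⁻¹ ^ n * ee (TT (n + 1) m) t :=
    Summable.le_tsum (gfun_summable TT m t) n₀
      (fun j _ => mul_nonneg (by positivity) (ee_pos _ _).le)
  have h3 : 0 ≤ σR m * ee (TT 0 m) t := mul_nonneg hσm (ee_pos _ _).le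
  unfold gfun
  linarith

lemma gfun_tendsto (σR : ℕ → ℝ) (TT : ℕ → ℕ → ℝ≥0) {m : ℕ} (hσm : 0 ≤ σR m) :
    Filter.Tendsto (gfun σR TT m) Filter.atTop (𝓝 0) := by
  rw [Metric.tendsto_atTop]
  intro ε hε
  obtain ⟨N, hN⟩ := exists_pow_lt_of_lt_one (show (0 : ℝ) < ε / 4 by linarith)
    (show (2 : ℝ)⁻¹ < 1 by norm_num)
  set H : ℝ≥0 → ℝ := fun t =>
    σR m * ee (TT 0 m) t + ∑ n ∈ Finset.range N, (2 : ℝ)⁻¹ ^ n * ee (TT (n + 1) m) t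
    with hH
  have hHt : Filter.Tendsto H Filter.atTop (𝓝 0) := by
    have h0 : (0 : ℝ) = σR m * 0 + ∑ n ∈ Finset.range N, (2 : ℝ)⁻¹ ^ n * 0 := by simp
    rw [hH, h0]
    exact (Filter.Tendsto.const_mul _ (ee_tendsto _)).add
      (tendsto_finset_sum _ fun n _ => Filter.Tendsto.const_mul _ (ee_tendsto _))
  obtain ⟨t₀, ht₀⟩ := Metric.tendsto_atTop.mp hHt (ε / 4) (by linarith)
  refine ⟨t₀, fun t ht => ?_⟩
  have hsplit : ∑' n : ℕ, (2 : ℝ)⁻¹ ^ n * ee (TT (n + 1) m) t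
      = ∑ n ∈ Finset.range N, (2 : ℝ)⁻¹ ^ n * ee (TT (n + 1) m) t
        + ∑' n : ℕ, (2 : ℝ)⁻¹ ^ (n + N) * ee (TT (n + N + 1) m) t :=
    (Summable.sum_add_tsum_nat_add N (gfun_summable TT m t)).symm
  have hs1 : Summable fun n : ℕ => (2 : ℝ)⁻¹ ^ (n + N) := by
    simpa [pow_add] using
      (summable_geometric_of_lt_one (by norm_num : (0:ℝ) ≤ 2⁻¹)
        (by norm_num : (2:ℝ)⁻¹ < 1)).mul_right ((2 : ℝ)⁻¹ ^ N)
  have hs2 : Summable fun n : ℕ => (2 : ℝ)⁻¹ ^ (n + N) * ee (TT (n + N + 1) m) t :=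
    (summable_nat_add_iff N).mpr (gfun_summable TT m t)
  have htail : ∑' n : ℕ, (2 : ℝ)⁻¹ ^ (n + N) * ee (TT (n + N + 1) m) t
      ≤ 2 * (2 : ℝ)⁻¹ ^ N := by
    calc ∑' n : ℕ, (2 : ℝ)⁻¹ ^ (n + N) * ee (TT (n + N + 1) m) t
        ≤ ∑' n : ℕ, (2 : ℝ)⁻¹ ^ (n + N) := by
          refine Summable.tsum_le_tsum (fun n => ?_) hs2 hs1
          calc (2 : ℝ)⁻¹ ^ (n + N) * ee (TT (n + N + 1) m) t
              ≤ (2 : ℝ)⁻¹ ^ (n + N) * 1 :=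
                mul_le_mul_of_nonneg_left (ee_le_one _ _) (by positivity)
            _ = (2 : ℝ)⁻¹ ^ (n + N) := mul_one _
      _ = (∑' n : ℕ, (2 : ℝ)⁻¹ ^ n) * (2 : ℝ)⁻¹ ^ N := by
          rw [← tsum_mul_right]
          congr 1
          funext n
          rw [pow_add]
      _ = 2 * (2 : ℝ)⁻¹ ^ N := by rw [tsum_geometric_inv_two]
  have hg : gfun σR TT m t ≤ H t + 2 * (2 : ℝ)⁻¹ ^ N := by
    unfold gfun
    rw [hsplit, hH]
    simp only []
    linarith
  have hHb : H t < ε / 4 := by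
    have := ht₀ t ht
    rw [Real.dist_eq, sub_zero] at this
    exact lt_of_le_of_lt (le_abs_self _) this
  have hgnn : 0 ≤ gfun σR TT m t := gfun_nonneg TT hσm t
  rw [Real.dist_eq, sub_zero, abs_of_nonneg hgnn]
  linarith

end Stmt18Aux

section Stmt18Sys

open Metric

variable {X : Type*} [NormedAddCommGroup X] [NormedSpace ℝ X]
variable {W : Type*} [NormedAddCommGroup W] [NormedSpace ℝ W]

lemma aux_shift_traj (S : System X W) (x : X) {d : ℝ≥0 → W} (hd : d ∈ S.Dist)
    {s t : ℝ≥0} (hst : s ≤ t) :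
    S.φ t x d = S.φ (t - s) (S.φ s x d) (fun u => d (u + s)) := by
  have h := S.cocycle s (t - s) x d hd
  rw [add_tsub_cancel_of_le hst] at h
  have heq : (fun u => d (s + u)) = fun u => d (u + s) := by
    funext u; rw [add_comm]
  rw [← h, heq]

lemma aux_imp12 (S : System X W) {A : Set X} (hA : A.Nonempty) (hAc : IsClosed A)
    {M : ℝ≥0} (hM : ∀ a ∈ A, ‖a‖ ≤ (M : ℝ)) (h : S.UGAS A) :
    S.RFC ∧ S.UGATT A ∧ S.RobustlyInvariant A := by
  obtain ⟨β, hβ, hbnd⟩ := h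
  obtain ⟨hβc, hβK, hβL⟩ := hβ
  obtain ⟨a₀, ha₀⟩ := hA
  have hβr : ∀ (r r' : ℝ≥0) (t : ℝ≥0), r ≤ r' → β r t ≤ β r' t :=
    fun r r' t hrr => ((hβK t).2.1).monotone hrr
  have hβt : ∀ (r : ℝ≥0) {t t' : ℝ≥0}, t ≤ t' → β r t' ≤ β r t := by
    intro r t t' htt
    rcases eq_or_lt_of_le (zero_le : (0:ℝ≥0) ≤ r) with hr | hr
    · have e1 : β 0 t' = 0 := (hβK t').2.2
      have e2 : β 0 t = 0 := (hβK t).2.2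
      rw [← hr, e1, e2]
    · exact ((hβL r hr).1).antitone htt
  refine ⟨?_, ?_, ?_, ?_⟩
  · -- RFC
    intro C _hC τ _hτ
    refine isBounded_iff_forall_norm_le.mpr ⟨(β (C + M) 0 : ℝ) + 1 + M, ?_⟩
    rintro y ⟨t, _htτ, d, hd, x, hx, rfl⟩
    have h1 : dA A x ≤ C + M := by
      refine (aux_dA_le_norm ha₀ hM x).trans ?_
      exact add_le_add_left hx M
    have h2 : dA A (S.φ t x d) ≤ β (C + M) 0 :=
      (hbnd x d hd t).trans ((hβr _ _ t h1).trans (hβt _ (zero_le : (0:ℝ≥0) ≤ t)))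
    refine (aux_norm_le_dA ⟨a₀, ha₀⟩ hM _).trans ?_
    have h3 : (dA A (S.φ t x d) : ℝ) ≤ (β (C + M) 0 : ℝ) := by exact_mod_cast h2
    linarith
  · -- UGATT
    intro ε hε r hr
    have htd : Filter.Tendsto (fun t => β r t) Filter.atTop (𝓝 0) := (hβL r hr).2
    have hev : ∀ᶠ t in Filter.atTop, β r t < ε := htd.eventually_lt_const hε
    obtain ⟨τ, hτ⟩ := Filter.eventually_atTop.mp hev
    refine ⟨τ, fun x hx d hd t ht => ?_⟩
    exact (hbnd x d hd t).trans ((hβr _ _ t hx).trans (hτ t ht).le)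
  · -- invariance
    rintro y ⟨t, d, hd, x, hx, rfl⟩
    have h1 : dA A (S.φ t x d) ≤ β 0 t := by
      have := hbnd x d hd t
      rwa [aux_dA_of_mem hx] at this
    have e0 : β 0 t = 0 := (hβK t).2.2
    rw [e0] at h1
    exact aux_mem_of_dA hAc ⟨a₀, ha₀⟩ (le_antisymm h1 zero_le)
  · -- robust part
    intro ε hε h hh
    obtain ⟨δ, hδ, hδe⟩ := aux_classK_small (hβK 0).1 (hβK 0).2.2 hε
    refine ⟨δ, hδ, fun t _ x hx d hd => ?_⟩
    exact (hbnd x d hd t).trans (((hβr _ _ t hx).trans (hβt _ (zero_le : (0:ℝ≥0) ≤ t))).trans hδe)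

lemma aux_imp23 (S : System X W) {A : Set X} :
    S.RFC ∧ S.UGATT A ∧ S.RobustlyInvariant A → S.RFC ∧ S.ULS A ∧ S.UGWA A := by
  rintro ⟨hrfc, hugatt, _hinv, hrob⟩
  refine ⟨hrfc, ?_, ?_⟩
  · intro ε hε
    obtain ⟨τ, hτ⟩ := hugatt ε hε 1 one_pos
    obtain ⟨δ, hδ, hδp⟩ := hrob ε hε (τ + 1) (by positivity)
    refine ⟨min δ 1, lt_min hδ one_pos, ?_⟩
    intro x hx d hd t
    rcases le_or_gt t (τ + 1) with hc | hc
    · exact hδp t hc x (hx.trans (min_le_left _ _)) d hd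
    · exact hτ x (hx.trans (min_le_right _ _)) d hd t (le_self_add.trans hc.le)
  · intro ε hε r hr
    obtain ⟨τ, hτ⟩ := hugatt ε hε r hr
    exact ⟨τ, fun x hx d hd => ⟨τ, le_rfl, hτ x hx d hd τ le_rfl⟩⟩

lemma aux_imp45 (S : System X W) {A : Set X} :
    S.UGS A ∧ S.UGWA A → S.UGS A ∧ S.UGATT A := by
  rintro ⟨⟨σ, hσ, hbnd⟩, hugwa⟩
  refine ⟨⟨σ, hσ, hbnd⟩, ?_⟩
  intro ε hε r hr
  obtain ⟨δ, hδ, hδe⟩ := aux_classK_small hσ.1.1 hσ.1.2.2 hε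
  obtain ⟨τ, hτ⟩ := hugwa δ hδ r hr
  refine ⟨τ, fun x hx d hd t ht => ?_⟩
  obtain ⟨s, hsτ, hs⟩ := hτ x hx d hd
  have hst : s ≤ t := hsτ.trans ht
  have hd' : (fun u => d (u + s)) ∈ S.Dist := S.shift_invariant d hd s
  calc dA A (S.φ t x d)
      = dA A (S.φ (t - s) (S.φ s x d) fun u => d (u + s)) := by
        rw [← aux_shift_traj S x hd hst]
    _ ≤ σ (dA A (S.φ s x d)) := hbnd _ _ hd' _
    _ ≤ σ δ := hσ.1.2.1.monotone hs
    _ ≤ ε := hδe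

lemma aux_imp34 (S : System X W) {A : Set X} (hA : A.Nonempty)
    {M : ℝ≥0} (hM : ∀ a ∈ A, ‖a‖ ≤ (M : ℝ)) :
    S.RFC ∧ S.ULS A ∧ S.UGWA A → S.UGS A ∧ S.UGWA A := by
  classical
  rintro ⟨hrfc, huls, hugwa⟩
  refine ⟨?_, hugwa⟩
  obtain ⟨a₀, ha₀⟩ := hA
  have hAne : A.Nonempty := ⟨a₀, ha₀⟩
  -- the "uniform bound" predicate
  have hbound : ∀ r : ℝ≥0, ∃ c : ℝ≥0,
      ∀ x : X, dA A x ≤ r → ∀ d ∈ S.Dist, ∀ t : ℝ≥0, dA A (S.φ t x d) ≤ c := by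
    intro r
    obtain ⟨δ₁, hδ₁, h1⟩ := huls 1 one_pos
    obtain ⟨τ, hτ⟩ := hugwa δ₁ hδ₁ (r + 1) (by positivity)
    obtain ⟨K, hK⟩ := isBounded_iff_forall_norm_le.mp
      (hrfc (r + M + 2) (by positivity) (τ + 1) (by positivity))
    refine ⟨max (Real.toNNReal K + M) 1, fun x hx d hd t => ?_⟩
    rcases le_or_gt t τ with hc | hc
    · have hxn : ‖x‖₊ ≤ r + M + 2 := by
        have h2 := aux_norm_le_dA hAne hM x
        have h3 : (dA A x : ℝ) ≤ r := by exact_mod_cast hx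
        have h4 : ‖x‖ ≤ ((r + M + 2 : ℝ≥0) : ℝ) := by push_cast; linarith
        have h5 : (‖x‖₊ : ℝ) = ‖x‖ := coe_nnnorm x
        rw [← NNReal.coe_le_coe, h5]
        exact h4
      have hmem : S.φ t x d ∈ S.RT (τ + 1) {y : X | ‖y‖₊ ≤ r + M + 2} :=
        ⟨t, hc.trans le_self_add, d, hd, x, hxn, rfl⟩
      have h4 : ‖S.φ t x d‖ ≤ K := hK _ hmem
      have h6 : ‖S.φ t x d‖₊ ≤ Real.toNNReal K := by
        rw [← NNReal.coe_le_coe, coe_nnnorm, Real.coe_toNNReal']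
        exact h4.trans (le_max_left _ _)
      refine le_trans (aux_dA_le_norm ha₀ hM _) (le_trans ?_ (le_max_left _ _))
      exact add_le_add_left h6 M
    · obtain ⟨s, hsτ, hs⟩ := hτ x (hx.trans le_self_add) d hd
      have hst : s ≤ t := hsτ.trans hc.le
      rw [aux_shift_traj S x hd hst]
      exact (h1 _ hs _ (S.shift_invariant d hd s) _).trans (le_max_right _ _)
  -- optimal bound
  set bfun : ℝ≥0 → ℝ≥0 := fun r => sInf {c | ∀ x : X, dA A x ≤ r →
    ∀ d ∈ S.Dist, ∀ t : ℝ≥0, dA A (S.φ t x d) ≤ c} with hbfdef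
  have hbB : ∀ (r : ℝ≥0) (x : X), dA A x ≤ r → ∀ d ∈ S.Dist, ∀ t : ℝ≥0,
      dA A (S.φ t x d) ≤ bfun r := by
    intro r x hx d hd t
    exact le_csInf ⟨_, (hbound r).choose_spec⟩ fun c hc => hc x hx d hd t
  have hbmono : Monotone bfun := by
    intro r r' hrr
    refine csInf_le_csInf (OrderBot.bddBelow _) ⟨_, (hbound r').choose_spec⟩ ?_
    intro c hc x hx d hd t
    exact hc x (hx.trans hrr) d hd t
  have hbsmall : ∀ k : ℕ, ∃ δ : ℝ≥0, 0 < δ ∧ bfun δ ≤ (2 : ℝ≥0)⁻¹ ^ k := by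
    intro k
    obtain ⟨δ, hδ, h⟩ := huls ((2 : ℝ≥0)⁻¹ ^ k) (by positivity)
    exact ⟨δ, hδ, csInf_le (OrderBot.bddBelow _) h⟩
  choose dk hdkpos hdkle using hbsmall
  -- the small-scale series
  set sfun : ℝ≥0 → ℝ := fun r => ∑' k : ℕ, (2 : ℝ)⁻¹ ^ k * clamp01 ((r : ℝ) / dk (k + 1))
    with hsfdef
  have hssummable : ∀ r : ℝ≥0,
      Summable fun k : ℕ => (2 : ℝ)⁻¹ ^ k * clamp01 ((r : ℝ) / dk (k + 1)) := by
    intro r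
    refine Summable.of_nonneg_of_le
      (fun k => mul_nonneg (by positivity) (clamp01_nonneg _)) (fun k => ?_)
      (summable_geometric_of_lt_one (r := (2:ℝ)⁻¹) (by norm_num) (by norm_num))
    calc (2 : ℝ)⁻¹ ^ k * clamp01 ((r : ℝ) / dk (k + 1))
        ≤ (2 : ℝ)⁻¹ ^ k * 1 := mul_le_mul_of_nonneg_left (clamp01_le_one _) (by positivity)
      _ = (2 : ℝ)⁻¹ ^ k := mul_one _
  have hscont : Continuous sfun := by
    refine continuous_tsum
      (fun k => continuous_const.mul (clamp01_continuous.comp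
        (NNReal.continuous_coe.div_const _)))
      (summable_geometric_of_lt_one (r := (2:ℝ)⁻¹) (by norm_num) (by norm_num))
      (fun k r => ?_)
    rw [Real.norm_eq_abs, abs_of_nonneg (mul_nonneg (by positivity) (clamp01_nonneg _))]
    calc (2 : ℝ)⁻¹ ^ k * clamp01 ((r : ℝ) / dk (k + 1))
        ≤ (2 : ℝ)⁻¹ ^ k * 1 := mul_le_mul_of_nonneg_left (clamp01_le_one _) (by positivity)
      _ = (2 : ℝ)⁻¹ ^ k := mul_one _
  have hsmono : Monotone sfun := by
    intro r r' hrr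
    refine Summable.tsum_le_tsum (fun k => ?_) (hssummable r) (hssummable r')
    refine mul_le_mul_of_nonneg_left (clamp01_mono ?_) (by positivity)
    have hpos : (0 : ℝ) < (dk (k + 1) : ℝ) := by exact_mod_cast hdkpos (k + 1)
    exact (div_le_div_iff_of_pos_right hpos).mpr (by exact_mod_cast hrr)
  have hs0 : sfun 0 = 0 := by
    rw [hsfdef]
    simp only [NNReal.coe_zero, zero_div, clamp01_of_nonpos le_rfl, mul_zero, tsum_zero]
  have hsnonneg : ∀ r, 0 ≤ sfun r :=
    fun r => tsum_nonneg fun k => mul_nonneg (by positivity) (clamp01_nonneg _)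
  have hsge : ∀ (k : ℕ) (r : ℝ≥0), dk (k + 1) ≤ r → (2 : ℝ)⁻¹ ^ k ≤ sfun r := by
    intro k r h
    have hpos : (0 : ℝ) < (dk (k + 1) : ℝ) := by exact_mod_cast hdkpos (k + 1)
    have hcl : clamp01 ((r : ℝ) / dk (k + 1)) = 1 :=
      clamp01_of_one_le ((one_le_div hpos).mpr (by exact_mod_cast h))
    have h2 := Summable.le_tsum (hssummable r) k
      (fun j _ => mul_nonneg (by positivity) (clamp01_nonneg _))
    rw [hcl, mul_one] at h2
    exact h2
  -- the large-scale part
  set vb : ℕ → ℝ≥0 → ℝ := fun m _ => (bfun ((m : ℝ≥0) + 1) : ℝ) with hvbdef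
  have hvbnn : ∀ m t, 0 ≤ vb m t := fun m t => (bfun _).coe_nonneg
  set bigb : ℝ≥0 → ℝ := fun r => bigSum vb r 0 with hbigdef
  have hbigcont : Continuous bigb := by
    have hpair : Continuous fun r : ℝ≥0 => ((r, 0) : ℝ≥0 × ℝ≥0) :=
      continuous_id.prodMk continuous_const
    have h := (bigSum_continuous (v := vb) fun m => continuous_const).comp hpair
    simpa [Function.comp_def] using h
  have hbigmono : Monotone bigb := fun r r' h => bigSum_mono_r hvbnn h 0
  have hbignn : ∀ r, 0 ≤ bigb r := fun r => bigSum_nonneg hvbnn r 0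
  have hbigge : ∀ r, (bfun r : ℝ) ≤ bigb r := by
    intro r
    have h1 : vb (Nat.floor r) 0 ≤ bigSum vb r 0 := le_bigSum hvbnn r 0
    have h2 : bfun r ≤ bfun ((Nat.floor r : ℝ≥0) + 1) :=
      hbmono (Nat.lt_floor_add_one r).le
    have h2' : (bfun r : ℝ) ≤ (bfun ((Nat.floor r : ℝ≥0) + 1) : ℝ) := by exact_mod_cast h2
    exact h2'.trans h1
  set clampTop : ℝ≥0 → ℝ := fun r => clamp01 ((r : ℝ) / dk 0) with hctdef
  have hctcont : Continuous clampTop :=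
    clamp01_continuous.comp (NNReal.continuous_coe.div_const _)
  have hctmono : Monotone clampTop := by
    intro r r' hrr
    refine clamp01_mono ?_
    have hpos : (0 : ℝ) < (dk 0 : ℝ) := by exact_mod_cast hdkpos 0
    exact (div_le_div_iff_of_pos_right hpos).mpr (by exact_mod_cast hrr)
  -- assemble
  set σF : ℝ≥0 → ℝ := fun r => (r : ℝ) + sfun r + clampTop r * bigb r with hσFdef
  have hσFc : Continuous σF :=
    (NNReal.continuous_coe.add hscont).add (hctcont.mul hbigcont)
  have hσFsm : StrictMono σF := by
    intro a b hab
    have h1 : (a : ℝ) < b := by exact_mod_cast hab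
    have h2 : sfun a ≤ sfun b := hsmono hab.le
    have h3 : clampTop a * bigb a ≤ clampTop b * bigb b :=
      mul_le_mul (hctmono hab.le) (hbigmono hab.le) (hbignn a) (clamp01_nonneg _)
    simp only [hσFdef]
    linarith
  have hσF0 : σF 0 = 0 := by
    simp only [hσFdef, hctdef, hs0, NNReal.coe_zero, zero_div,
      clamp01_of_nonpos le_rfl, zero_mul, add_zero]
  have hσFge : ∀ r : ℝ≥0, (r : ℝ) ≤ σF r := by
    intro r
    have h1 := hsnonneg r
    have h2 := mul_nonneg (clamp01_nonneg ((r : ℝ) / dk 0)) (hbignn r)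
    simp only [hσFdef]
    simp only [hctdef]
    linarith
  have hσFmaj : ∀ r : ℝ≥0, (bfun r : ℝ) ≤ σF r := by
    intro r
    by_cases hex : ∃ k, dk k ≤ r
    · set k₀ := Nat.find hex with hk0
      have hk₀le : dk k₀ ≤ r := Nat.find_spec hex
      rcases Nat.eq_zero_or_pos k₀ with h0 | hpos
    -- clampTop r = 1, use big part
      · have hct : clampTop r = 1 := by
          refine clamp01_of_one_le ?_
          have hpos0 : (0 : ℝ) < (dk 0 : ℝ) := by exact_mod_cast hdkpos 0
          refine (one_le_div hpos0).mpr ?_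
          have h5 : dk 0 ≤ r := h0 ▸ hk₀le
          exact_mod_cast h5
        have h6 := hbigge r
        have h4 := hsnonneg r
        have h5 := r.coe_nonneg
        simp only [hσFdef]
        rw [hct, one_mul]
        linarith
      · obtain ⟨k, hk⟩ := Nat.exists_eq_succ_of_ne_zero hpos.ne'
        have hlt : ¬ dk k ≤ r := Nat.find_min hex (by omega)
        have hb1 : bfun r ≤ (2 : ℝ≥0)⁻¹ ^ k :=
          (hbmono (le_of_not_ge hlt)).trans (hdkle k)
        have hs1 : (2 : ℝ)⁻¹ ^ k ≤ sfun r := hsge k r (by rw [show k + 1 = k₀ by omega]; exact hk₀le)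
        have hb1' : (bfun r : ℝ) ≤ (2 : ℝ)⁻¹ ^ k := by
          refine le_trans ?_ (by norm_num : ((2 : ℝ≥0)⁻¹ ^ k : ℝ) ≤ (2 : ℝ)⁻¹ ^ k)
          exact_mod_cast hb1
        have h2 := mul_nonneg (clamp01_nonneg ((r : ℝ) / dk 0)) (hbignn r)
        have h5 := r.coe_nonneg
        simp only [hσFdef, hctdef]
        linarith
    · push_neg at hex
      have hb0 : ∀ k, bfun r ≤ (2 : ℝ≥0)⁻¹ ^ k := fun k =>
        (hbmono (hex k).le).trans (hdkle k)
      have hble : (bfun r : ℝ) ≤ 0 := by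
        have htend : Filter.Tendsto (fun k : ℕ => ((2 : ℝ)⁻¹) ^ k)
            Filter.atTop (𝓝 0) :=
          tendsto_pow_atTop_nhds_zero_of_lt_one (by norm_num) (by norm_num)
        refine ge_of_tendsto htend (Filter.Eventually.of_forall fun k => ?_)
        refine le_trans ?_ (by norm_num : ((2 : ℝ≥0)⁻¹ ^ k : ℝ) ≤ (2 : ℝ)⁻¹ ^ k)
        exact_mod_cast hb0 k
      have h2 := mul_nonneg (clamp01_nonneg ((r : ℝ) / dk 0)) (hbignn r)
      have h4 := hsnonneg r
      have h5 := r.coe_nonneg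
      simp only [hσFdef, hctdef]
      linarith
  refine ⟨fun r => (σF r).toNNReal, aux_classKinf_toNNReal hσFc hσFsm hσF0 hσFge, ?_⟩
  intro x d hd t
  refine (hbB (dA A x) x le_rfl d hd t).trans ?_
  calc bfun (dA A x) = ((bfun (dA A x) : ℝ)).toNNReal := (Real.toNNReal_coe).symm
    _ ≤ (σF (dA A x)).toNNReal := Real.toNNReal_mono (hσFmaj _)

lemma aux_imp51 (S : System X W) {A : Set X} :
    S.UGS A ∧ S.UGATT A → S.UGAS A := by
  classical
  rintro ⟨⟨σ, hσ, hbnd⟩, hugatt⟩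
  obtain ⟨⟨hσc, hσm, hσ0⟩, hσu⟩ := hσ
  have hchoice : ∀ n m : ℕ, ∃ τ : ℝ≥0, ∀ x : X, dA A x ≤ (m : ℝ≥0) + 1 →
      ∀ d ∈ S.Dist, ∀ t : ℝ≥0, τ ≤ t → dA A (S.φ t x d) ≤ (2 : ℝ≥0)⁻¹ ^ n :=
    fun n m => hugatt _ (by positivity) _ (by positivity)
  choose τf hτf using hchoice
  set TT : ℕ → ℕ → ℝ≥0 := fun n m =>
    (Finset.range (n + 1)).sup (fun k => τf k m) + (n : ℝ≥0) + 1 with hTTdef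
  have hTT1 : ∀ n m, τf n m ≤ TT n m := by
    intro n m
    refine le_trans (Finset.le_sup (f := fun k => τf k m) (b := n) (Finset.mem_range.mpr (Nat.lt_succ_self n))) ?_
    exact le_self_add.trans le_self_add
  have hTTn : ∀ n m t, TT n m ≤ t → ((n : ℝ≥0) + 1) ≤ t := by
    intro n m t h
    refine le_trans ?_ h
    rw [hTTdef]
    simp only []
    rw [add_assoc]
    exact le_add_self
  set σR : ℕ → ℝ := fun m => (σ ((m : ℝ≥0) + 1) : ℝ) with hσRdef
  have hσRnn : ∀ m, 0 ≤ σR m := fun m => (σ _).coe_nonneg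
  set vg : ℕ → ℝ≥0 → ℝ := fun m t => gfun σR TT m t with hvgdef
  have hvgnn : ∀ m t, 0 ≤ vg m t := fun m t => gfun_nonneg TT (hσRnn m) t
  set GG : ℝ≥0 → ℝ≥0 → ℝ := fun r t => bigSum vg r t with hGGdef
  have hposE : ∀ (r t : ℝ≥0), 0 < GG r t + Real.exp (-(t : ℝ)) := fun r t =>
    add_pos_of_nonneg_of_pos (bigSum_nonneg hvgnn r t) (Real.exp_pos _)
  -- main trajectory bound
  have hmain : ∀ (x : X), ∀ d ∈ S.Dist, ∀ t : ℝ≥0,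
      (dA A (S.φ t x d) : ℝ) ≤
        Real.sqrt ((σ (dA A x) : ℝ) * (GG (dA A x) t + Real.exp (-(t : ℝ)))) := by
    intro x d hd t
    set r := dA A x with hrdef
    set m := Nat.floor r with hmdef
    have hxm : dA A x ≤ (m : ℝ≥0) + 1 := (Nat.lt_floor_add_one r).le
    have claim2 : (dA A (S.φ t x d) : ℝ) ≤ vg m t := by
      by_cases hcase : t ≤ TT 0 m
      · refine le_trans ?_ (gfun_ge_sigma hcase)
        have h1 : dA A (S.φ t x d) ≤ σ ((m : ℝ≥0) + 1) :=
          (hbnd x d hd t).trans (hσm.monotone hxm)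
        exact NNReal.coe_le_coe.mpr h1
      · push_neg at hcase
        set P : ℕ → Prop := fun n => TT n m ≤ t with hPdef
        have hPbound : ∀ n, P n → n ≤ Nat.ceil t := by
          intro n hn
          have h1 : ((n : ℝ≥0) + 1) ≤ t := hTTn n m t hn
          have h2 : (n : ℝ≥0) ≤ t := le_self_add.trans h1
          calc n = Nat.ceil ((n : ℝ≥0)) := (Nat.ceil_natCast n).symm
            _ ≤ Nat.ceil t := Nat.ceil_mono h2
        set n₀ := Nat.findGreatest P (Nat.ceil t) with hn₀def
        have hP0 : P 0 := hcase.le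
        have hn₀P : P n₀ := Nat.findGreatest_spec (Nat.zero_le _) hP0
        have hnot : ¬ P (n₀ + 1) := by
          by_cases hle : n₀ + 1 ≤ Nat.ceil t
          · exact Nat.findGreatest_is_greatest (Nat.lt_succ_self _) hle
          · intro hP
            exact hle (hPbound _ hP)
        have ht1 : t ≤ TT (n₀ + 1) m := (not_le.mp hnot).le
        have h2 : dA A (S.φ t x d) ≤ (2 : ℝ≥0)⁻¹ ^ n₀ :=
          hτf n₀ m x hxm d hd t ((hTT1 n₀ m).trans hn₀P)
        refine le_trans ?_ (gfun_ge_pow (hσRnn m) n₀ ht1)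
        calc (dA A (S.φ t x d) : ℝ) ≤ (((2 : ℝ≥0)⁻¹ ^ n₀ : ℝ≥0) : ℝ) := by
              exact_mod_cast h2
          _ = (2 : ℝ)⁻¹ ^ n₀ := by push_cast; ring
    have claim3 : vg m t ≤ GG r t := le_bigSum hvgnn r t
    have claim1 : (dA A (S.φ t x d) : ℝ) ≤ (σ r : ℝ) := by
      exact_mod_cast hbnd x d hd t
    have hdnn : (0 : ℝ) ≤ (dA A (S.φ t x d) : ℝ) := (dA A _).coe_nonneg
    have hE : (0 : ℝ) < Real.exp (-(t : ℝ)) := Real.exp_pos _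
    have hGnn : 0 ≤ GG r t := bigSum_nonneg hvgnn r t
    refine (Real.le_sqrt hdnn (mul_nonneg (σ r).coe_nonneg (by linarith))).mpr ?_
    calc (dA A (S.φ t x d) : ℝ) ^ 2
        = (dA A (S.φ t x d) : ℝ) * (dA A (S.φ t x d) : ℝ) := pow_two _
      _ ≤ (σ r : ℝ) * (GG r t + Real.exp (-(t : ℝ))) := by
          refine mul_le_mul claim1 ?_ hdnn (σ r).coe_nonneg
          linarith
  set BF : ℝ≥0 → ℝ≥0 → ℝ :=
    fun r t => Real.sqrt ((σ r : ℝ) * (GG r t + Real.exp (-(t : ℝ)))) with hBFdef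
  have hGGcont : Continuous fun p : ℝ≥0 × ℝ≥0 => GG p.1 p.2 :=
    bigSum_continuous fun m => gfun_continuous σR TT m
  have hc : Continuous fun p : ℝ≥0 × ℝ≥0 => BF p.1 p.2 := by
    refine Real.continuous_sqrt.comp (Continuous.mul ?_ ?_)
    · exact NNReal.continuous_coe.comp (hσc.comp continuous_fst)
    · exact hGGcont.add
        (Real.continuous_exp.comp (NNReal.continuous_coe.comp continuous_snd).neg)
  have hnn : ∀ r t, 0 ≤ BF r t := fun r t => Real.sqrt_nonneg _
  have hK : ∀ t, StrictMono fun r => BF r t := by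
    intro t a b hab
    have h1 : (σ a : ℝ) < (σ b : ℝ) := by exact_mod_cast hσm hab
    have h2 : GG a t ≤ GG b t := bigSum_mono_r hvgnn hab.le t
    refine Real.sqrt_lt_sqrt (mul_nonneg (σ a).coe_nonneg (hposE a t).le) ?_
    calc (σ a : ℝ) * (GG a t + Real.exp (-(t : ℝ)))
        ≤ (σ a : ℝ) * (GG b t + Real.exp (-(t : ℝ))) :=
          mul_le_mul_of_nonneg_left (by linarith) (σ a).coe_nonneg
      _ < (σ b : ℝ) * (GG b t + Real.exp (-(t : ℝ))) :=
          mul_lt_mul_of_pos_right h1 (hposE b t)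
  have h0 : ∀ t, BF 0 t = 0 := by
    intro t
    rw [hBFdef]
    simp only [hσ0, NNReal.coe_zero, zero_mul, Real.sqrt_zero]
  have hAnti : ∀ r, 0 < r → StrictAnti fun t => BF r t := by
    intro r hr t t' htt
    have hσp : (0 : ℝ≥0) < σ r := by
      have h := hσm hr
      rwa [hσ0] at h
    have hσpos : (0 : ℝ) < (σ r : ℝ) := by exact_mod_cast hσp
    have h2 : GG r t' ≤ GG r t :=
      bigSum_anti_t (fun m => gfun_antitone TT (hσRnn m)) htt.le r
    have h3 : Real.exp (-(t' : ℝ)) < Real.exp (-(t : ℝ)) := by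
      rw [Real.exp_lt_exp]
      have h4 : (t : ℝ) < (t' : ℝ) := by exact_mod_cast htt
      linarith
    refine Real.sqrt_lt_sqrt (mul_nonneg (σ r).coe_nonneg (hposE r t').le) ?_
    exact mul_lt_mul_of_pos_left (by linarith) hσpos
  have hTend : ∀ r, 0 < r → Filter.Tendsto (fun t => BF r t) Filter.atTop (𝓝 0) := by
    intro r _
    have h2 : Filter.Tendsto (fun t : ℝ≥0 => GG r t) Filter.atTop (𝓝 0) :=
      bigSum_tendsto r fun m => gfun_tendsto σR TT (hσRnn m)
    have h1 : Filter.Tendsto (fun t : ℝ≥0 => GG r t + Real.exp (-(t : ℝ)))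
        Filter.atTop (𝓝 0) := by
      simpa using h2.add aux_expneg_tendsto
    have h4 : Filter.Tendsto
        (fun t : ℝ≥0 => (σ r : ℝ) * (GG r t + Real.exp (-(t : ℝ))))
        Filter.atTop (𝓝 0) := by
      simpa using h1.const_mul (σ r : ℝ)
    have h5 := (Real.continuous_sqrt.tendsto 0).comp h4
    simpa [Real.sqrt_zero, Function.comp_def, hBFdef] using h5
  refine ⟨fun r t => (BF r t).toNNReal,
    aux_classKL_toNNReal hc hnn hK h0 hAnti hTend, ?_⟩
  intro x d hd t
  calc dA A (S.φ t x d) = ((dA A (S.φ t x d) : ℝ)).toNNReal := (Real.toNNReal_coe).symm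
    _ ≤ (BF (dA A x) t).toNNReal := Real.toNNReal_mono (hmain x d hd t)

end Stmt18Sys

/-- characterizations of UGAS. -/
theorem stmt18 {X : Type*} [NormedAddCommGroup X] [NormedSpace ℝ X]
    {W : Type*} [NormedAddCommGroup W] [NormedSpace ℝ W] (S : System X W) (A : Set X) (hA : A.Nonempty) (hAb : IsBounded A)
    (hAc : IsClosed A) :
    [ S.UGAS A,
      S.RFC ∧ S.UGATT A ∧ S.RobustlyInvariant A,
      S.RFC ∧ S.ULS A ∧ S.UGWA A,
      S.UGS A ∧ S.UGWA A,
      S.UGS A ∧ S.UGATT A ].TFAE := by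
  obtain ⟨MA, hMA⟩ := isBounded_iff_forall_norm_le.mp hAb
  have hM : ∀ a ∈ A, ‖a‖ ≤ ((Real.toNNReal MA : ℝ≥0) : ℝ) := fun a ha =>
    (hMA a ha).trans (Real.le_coe_toNNReal MA)
  tfae_have 1 → 2 := aux_imp12 S hA hAc hM
  tfae_have 2 → 3 := aux_imp23 S
  tfae_have 3 → 4 := aux_imp34 S hA hM
  tfae_have 4 → 5 := aux_imp45 S
  tfae_have 5 → 1 := aux_imp51 S
  tfae_finish
end
end

section
/- Let X be a Banach space and T a strongly continuous semigroup of bounded linear operators on X. The following statements are equivalent: (i) T is exponentially stable, i.e. there exist M, ω > 0 with ‖T(t)x‖ ≤ M e^{−ωt} ‖x‖ for all t ≥ 0 and x ∈ X; (ii) {0} is uniformly globally asymptotically stable, i.e. there is β ∈ 𝒦ℒ with ‖T(t)x‖ ≤ β(‖x‖, t) for all t ≥ 0, x ∈ X; (iii) {0} is uniformly globally attractive, i.e. for all ε, r > 0 there is τ such that ‖x‖ ≤ r and t ≥ τ imply ‖T(t)x‖ ≤ ε; (iv) {0} is uniformly globally weakly attractive, i.e. for all ε, r > 0 there is τ such that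 for every x with ‖x‖ ≤ r there exists t ≤ τ with ‖T(t)x‖ ≤ ε; (v) there exists a non-coercive Lyapunov function, i.e. a continuous V : X → [0,∞) with V(0) = 0, some ψ₂ ∈ 𝒦_∞ with 0 < V(x) ≤ ψ₂(‖x‖) for all x ≠ 0, and some α ∈ 𝒦 with liminf_{t→0⁺} (V(T(t)x) − V(x))/t ≤ −α(‖x‖) for all x ≠ 0. -/
open scoped NNReal ENNReal
open Filter Topology Bornology

noncomputable section

lemma cobound_of_liminf_le {α : Type*} {f : α → ℝ} {l : Filter α} {c : ℝ}
    (hc : c < 0) (hL : Filter.liminf f l ≤ c) :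
    Filter.IsCoboundedUnder (· ≥ ·) l f := by
  by_contra h
  have hS : ¬ BddAbove {a : ℝ | ∀ᶠ y in l, a ≤ f y} := by
    rintro ⟨b, hb⟩
    exact h ⟨b, fun a ha => hb (by simpa [Filter.eventually_map] using ha)⟩
  rw [Filter.liminf_eq, Real.sSup_of_not_bddAbove hS] at hL
  linarith

lemma st_41 {X : Type*} [NormedAddCommGroup X] [NormedSpace ℝ X] [CompleteSpace X]
    (T : ℝ≥0 → X →L[ℝ] X)
    (hT0 : T 0 = ContinuousLinearMap.id ℝ X)
    (hTadd : ∀ t s : ℝ≥0, T (t + s) = (T t).comp (T s))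
    (hTcont : ∀ x : X, Continuous fun t : ℝ≥0 => T t x)
    (h4 : ∀ ε : ℝ≥0, 0 < ε → ∀ r : ℝ≥0, 0 < r → ∃ τ : ℝ≥0,
        ∀ x : X, ‖x‖₊ ≤ r → ∃ t ≤ τ, ‖T t x‖₊ ≤ ε) :
    ∃ M ω : ℝ, 0 < M ∧ 0 < ω ∧
        ∀ (t : ℝ≥0) (x : X), ‖T t x‖ ≤ M * Real.exp (-ω * (t : ℝ)) * ‖x‖ := by
  obtain ⟨τ₀, hτ₀⟩ := h4 (1/2) (by norm_num) 1 one_pos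
  set τ : ℝ≥0 := τ₀ + 1 with hτdef
  have hτpos : (0:ℝ≥0) < τ := by positivity
  have hτR : (0:ℝ) < (τ:ℝ) := hτpos
  -- halving step
  have step : ∀ x : X, ∃ t ≤ τ, ‖T t x‖ ≤ ‖x‖ / 2 := by
    intro x
    by_cases hx : x = 0
    · exact ⟨0, zero_le, by simp [hx]⟩
    · have hxn : (0:ℝ) < ‖x‖ := norm_pos_iff.mpr hx
      have hxn' : ‖x‖₊ ≠ 0 := by simpa using hx
      obtain ⟨t, ht, hty⟩ := hτ₀ ((‖x‖)⁻¹ • x) (by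
        have : ‖(‖x‖)⁻¹ • x‖₊ = ‖x‖₊⁻¹ * ‖x‖₊ := by
          rw [nnnorm_smul, nnnorm_inv, nnnorm_norm]
        rw [this, inv_mul_cancel₀ hxn'])
      refine ⟨t, ht.trans le_self_add, ?_⟩
      have hty' : ‖T t ((‖x‖)⁻¹ • x)‖ ≤ 1/2 := by
        have := (NNReal.coe_le_coe.mpr hty)
        push_cast at this
        simpa using this
      rw [map_smul, norm_smul, norm_inv, norm_norm] at hty'
      rw [div_eq_mul_inv, mul_comm]
      calc ‖T t x‖ = ‖x‖ * ((‖x‖)⁻¹ * ‖T t x‖) := by field_simp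
        _ ≤ ‖x‖ * (1/2) := by
            apply mul_le_mul_of_nonneg_left _ (norm_nonneg x)
            simpa using hty'
        _ = 2⁻¹ * ‖x‖ := by ring
  -- Banach–Steinhaus on compact time intervals
  have bs : ∀ u : ℝ≥0, ∃ C : ℝ, ∀ s : ℝ≥0, s ≤ u → ‖T s‖ ≤ C := by
    intro u
    have hpt : ∀ x : X, ∃ C : ℝ, ∀ s : Set.Icc (0:ℝ≥0) u, ‖T s x‖ ≤ C := by
      intro x
      obtain ⟨C, hC⟩ := (isCompact_Icc (a := (0:ℝ≥0)) (b := u)).exists_bound_of_continuousOn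
        ((hTcont x).continuousOn)
      exact ⟨C, fun s => hC s s.2⟩
    obtain ⟨C', hC'⟩ := banach_steinhaus hpt
    exact ⟨C', fun s hs => hC' ⟨s, ⟨zero_le, hs⟩⟩⟩
  obtain ⟨C₀, hC₀⟩ := bs τ
  set C : ℝ := max C₀ 0 with hCdef
  have hC : 0 ≤ C := le_max_right _ _
  have hCb : ∀ s, s ≤ τ → ‖T s‖ ≤ C := fun s hs => (hC₀ s hs).trans (le_max_left _ _)
  -- global uniform bound
  have glob : ∀ (s : ℝ≥0) (x : X), ‖T s x‖ ≤ 2*C*‖x‖ := by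
    intro s x
    obtain ⟨Cu, hCu⟩ := bs s
    have hne : ((fun v : ℝ≥0 => ‖T v‖) '' Set.Iic s).Nonempty :=
      ⟨‖T 0‖, 0, Set.mem_Iic.mpr zero_le, rfl⟩
    have hbdd : BddAbove ((fun v : ℝ≥0 => ‖T v‖) '' Set.Iic s) :=
      ⟨Cu, by rintro _ ⟨v, hv, rfl⟩; exact hCu v hv⟩
    set B := sSup ((fun v : ℝ≥0 => ‖T v‖) '' Set.Iic s) with hBdef
    have hBmem : ∀ v, v ≤ s → ‖T v‖ ≤ B := fun v hv => le_csSup hbdd ⟨v, hv, rfl⟩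
    have hB0 : 0 ≤ B := le_trans (norm_nonneg _) (hBmem 0 zero_le)
    have claim1 : ∀ v, v ≤ s → ‖T v‖ ≤ max C (B/2) := by
      intro v hv
      rcases le_or_gt v τ with hvτ | hvτ
      · exact (hCb v hvτ).trans (le_max_left _ _)
      · refine ContinuousLinearMap.opNorm_le_bound _ (le_trans hC (le_max_left _ _)) ?_
        intro x
        obtain ⟨t, htτ, htx⟩ := step x
        have htv : t ≤ v := htτ.trans hvτ.le
        have hsplit : T v = (T (v - t)).comp (T t) := by
          rw [← hTadd]; congr 1; exact (tsub_add_cancel_of_le htv).symm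
        calc ‖T v x‖ = ‖T (v-t) (T t x)‖ := by rw [hsplit]; rfl
          _ ≤ ‖T (v-t)‖ * ‖T t x‖ := ContinuousLinearMap.le_opNorm _ _
          _ ≤ B * (‖x‖/2) := by
              apply mul_le_mul (hBmem _ (le_trans tsub_le_self hv)) htx (norm_nonneg _) hB0
          _ = (B/2) * ‖x‖ := by ring
          _ ≤ max C (B/2) * ‖x‖ :=
              mul_le_mul_of_nonneg_right (le_max_right _ _) (norm_nonneg _)
    have claim2 : B ≤ max C (B/2) :=
      csSup_le hne (by rintro _ ⟨v, hv, rfl⟩; exact claim1 v hv)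
    have claim3 : B ≤ 2*C := by
      rcases max_cases C (B/2) with ⟨h1, _⟩ | ⟨h1, _⟩ <;> rw [h1] at claim2 <;> linarith
    calc ‖T s x‖ ≤ ‖T s‖ * ‖x‖ := ContinuousLinearMap.le_opNorm _ _
      _ ≤ (2*C) * ‖x‖ :=
          mul_le_mul_of_nonneg_right (le_trans (hBmem s le_rfl) claim3) (norm_nonneg _)
  -- geometric decay along a sequence of times
  have decay : ∀ (n : ℕ) (x : X), ∃ s : ℝ≥0, s ≤ (n : ℝ≥0) * τ ∧
      ‖T s x‖ ≤ (1/2)^n * ‖x‖ := by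
    intro n
    induction n with
    | zero => intro x; exact ⟨0, by simp, by simp [hT0]⟩
    | succ n ih =>
      intro x
      obtain ⟨s, hs, hsx⟩ := ih x
      obtain ⟨t, ht, htx⟩ := step (T s x)
      refine ⟨s + t, ?_, ?_⟩
      · calc s + t ≤ (n : ℝ≥0)*τ + τ := add_le_add hs ht
          _ = ((n+1 : ℕ) : ℝ≥0)*τ := by push_cast; ring
      · have hco : T (s+t) x = T t (T s x) := by rw [add_comm s t, hTadd]; rfl
        rw [hco]
        calc ‖T t (T s x)‖ ≤ ‖T s x‖/2 := htx
          _ ≤ ((1/2)^n * ‖x‖)/2 := by linarith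
          _ = (1/2)^(n+1) * ‖x‖ := by ring
  refine ⟨4*C+1, Real.log 2 / (τ:ℝ), by positivity,
    div_pos (Real.log_pos one_lt_two) hτR, ?_⟩
  intro t x
  set n := ⌊(t/τ : ℝ≥0)⌋₊ with hndef
  have hn1 : (n:ℝ≥0) * τ ≤ t := by
    have h1 : (n:ℝ≥0) ≤ t/τ := Nat.floor_le zero_le
    calc (n:ℝ≥0) * τ ≤ (t/τ) * τ := mul_le_mul_of_nonneg_right h1 zero_le
      _ = t := div_mul_cancel₀ _ hτpos.ne'
  have hn2 : (t:ℝ)/(τ:ℝ) < (n:ℝ)+1 := by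
    have := Nat.lt_floor_add_one (t/τ)
    have h2 : ((t/τ : ℝ≥0):ℝ) < ((n:ℝ≥0):ℝ) + 1 := by exact_mod_cast this
    rwa [NNReal.coe_div] at h2
  obtain ⟨s, hs, hsx⟩ := decay n x
  have hst : s ≤ t := hs.trans hn1
  have hsplit : T t = (T (t-s)).comp (T s) := by
    rw [← hTadd]; congr 1; exact (tsub_add_cancel_of_le hst).symm
  have key : ‖T t x‖ ≤ 2*C*((1/2)^n * ‖x‖) := by
    have h1 : ‖T t x‖ = ‖T (t-s) (T s x)‖ := by rw [hsplit]; rfl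
    rw [h1]
    refine (glob (t-s) (T s x)).trans ?_
    exact mul_le_mul_of_nonneg_left hsx (by positivity)
  have hpow : ((1:ℝ)/2)^n ≤ 2 * Real.exp (-(Real.log 2 / (τ:ℝ)) * t) := by
    have h2 : Real.exp (-(Real.log 2/(τ:ℝ))*t) = (2:ℝ) ^ (-((t:ℝ)/(τ:ℝ))) := by
      rw [Real.rpow_def_of_pos two_pos]; ring_nf
    have h3 : ((1:ℝ)/2)^n = (2:ℝ) ^ (-(n:ℝ)) := by
      rw [Real.rpow_neg (by norm_num : (0:ℝ) ≤ 2), Real.rpow_natCast]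
      simp [one_div, inv_pow]
    rw [h2, h3]
    have h21 : (2:ℝ) * 2 ^ (-((t:ℝ)/(τ:ℝ))) = 2 ^ (1 - (t:ℝ)/(τ:ℝ)) := by
      rw [sub_eq_add_neg, Real.rpow_add two_pos, Real.rpow_one]
    rw [h21]
    apply (Real.rpow_le_rpow_left_iff one_lt_two).mpr
    linarith
  have hexp : (0:ℝ) < Real.exp (-(Real.log 2 / (τ:ℝ)) * t) := Real.exp_pos _
  calc ‖T t x‖ ≤ 2*C*((1/2)^n * ‖x‖) := key
    _ = (2*C) * (1/2)^n * ‖x‖ := by ring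
    _ ≤ (2*C) * (2 * Real.exp (-(Real.log 2 / (τ:ℝ)) * t)) * ‖x‖ := by
        apply mul_le_mul_of_nonneg_right _ (norm_nonneg _)
        exact mul_le_mul_of_nonneg_left hpow (by positivity)
    _ = (4*C) * Real.exp (-(Real.log 2 / (τ:ℝ)) * t) * ‖x‖ := by ring
    _ ≤ (4*C+1) * Real.exp (-(Real.log 2 / (τ:ℝ)) * t) * ‖x‖ := by
        apply mul_le_mul_of_nonneg_right _ (norm_nonneg _)
        nlinarith

lemma st_12 {X : Type*} [NormedAddCommGroup X] [NormedSpace ℝ X]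
    (T : ℝ≥0 → X →L[ℝ] X)
    (h1 : ∃ M ω : ℝ, 0 < M ∧ 0 < ω ∧
        ∀ (t : ℝ≥0) (x : X), ‖T t x‖ ≤ M * Real.exp (-ω * (t : ℝ)) * ‖x‖) :
    ∃ β : ℝ≥0 → ℝ≥0 → ℝ≥0, ClassKL β ∧
        ∀ (t : ℝ≥0) (x : X), ‖T t x‖₊ ≤ β ‖x‖₊ t := by
  obtain ⟨M, ω, hM, hω, hb⟩ := h1
  set Mn : ℝ≥0 := M.toNNReal with hMn
  have hMnpos : 0 < Mn := Real.toNNReal_pos.mpr hM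
  set β : ℝ≥0 → ℝ≥0 → ℝ≥0 :=
    fun r t => (Mn * r) * (Real.exp (-ω * (t:ℝ))).toNNReal with hβ
  have hepos : ∀ t : ℝ≥0, 0 < (Real.exp (-ω * (t:ℝ))).toNNReal :=
    fun t => Real.toNNReal_pos.mpr (Real.exp_pos _)
  have hcoe : ∀ r t, ((β r t : ℝ≥0) : ℝ) = (Mn:ℝ) * r * Real.exp (-ω * (t:ℝ)) := by
    intro r t
    simp [hβ, Real.coe_toNNReal _ (Real.exp_pos _).le]
  refine ⟨β, ⟨?_, ?_, ?_⟩, ?_⟩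
  · -- continuity
    apply Continuous.mul
    · exact (continuous_const.mul continuous_fst)
    · exact continuous_real_toNNReal.comp
        ((Real.continuous_exp).comp (continuous_const.mul (NNReal.continuous_coe.comp continuous_snd)))
  · -- ClassK in r
    intro t
    refine ⟨by fun_prop, ?_, by simp [hβ]⟩
    intro a b hab
    simp only [hβ]
    have h1 : Mn * a < Mn * b := mul_lt_mul_of_pos_left hab hMnpos
    exact mul_lt_mul_of_pos_right h1 (hepos t)
  · -- KL in t
    intro r hr
    constructor
    · intro a b hab
      simp only [hβ]
      apply mul_lt_mul_of_pos_left _ (mul_pos hMnpos hr)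
      apply (Real.toNNReal_lt_toNNReal_iff (Real.exp_pos _)).mpr
      apply Real.exp_lt_exp.mpr
      have : (a:ℝ) < b := hab
      nlinarith
    · have h1 : Tendsto (fun t : ℝ≥0 => (t:ℝ)) atTop atTop :=
        NNReal.tendsto_coe_atTop.mpr tendsto_id
      have h2 : Tendsto (fun t : ℝ≥0 => -ω * (t:ℝ)) atTop atBot :=
        h1.const_mul_atTop_of_neg (neg_neg_iff_pos.mpr hω)
      have h3 : Tendsto (fun t : ℝ≥0 => (Real.exp (-ω * (t:ℝ))).toNNReal) atTop (𝓝 0) := by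
        have := (continuous_real_toNNReal.tendsto 0).comp (Real.tendsto_exp_atBot.comp h2)
        simpa [Function.comp_def] using this
      have h4 := h3.const_mul (Mn * r)
      simpa [hβ] using h4
  · intro t x
    rw [← NNReal.coe_le_coe, coe_nnnorm, hcoe]
    have hMeq : (Mn:ℝ) = M := Real.coe_toNNReal _ hM.le
    rw [coe_nnnorm, hMeq,
      show M * ‖x‖ * Real.exp (-ω * (t:ℝ)) = M * Real.exp (-ω * (t:ℝ)) * ‖x‖ from by ring]
    exact hb t x

lemma st_23 {X : Type*} [NormedAddCommGroup X] [NormedSpace ℝ X]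
    (T : ℝ≥0 → X →L[ℝ] X)
    (h2 : ∃ β : ℝ≥0 → ℝ≥0 → ℝ≥0, ClassKL β ∧
        ∀ (t : ℝ≥0) (x : X), ‖T t x‖₊ ≤ β ‖x‖₊ t) :
    ∀ ε : ℝ≥0, 0 < ε → ∀ r : ℝ≥0, 0 < r → ∃ τ : ℝ≥0,
        ∀ x : X, ‖x‖₊ ≤ r → ∀ t : ℝ≥0, τ ≤ t → ‖T t x‖₊ ≤ ε := by
  obtain ⟨β, ⟨hβc, hβK, hβL⟩, hβb⟩ := h2
  intro ε hε r hr
  obtain ⟨hanti, htend⟩ := hβL r hr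
  have : ∀ᶠ t in atTop, β r t < ε := htend.eventually_lt_const hε
  obtain ⟨τ, hτ⟩ := this.exists_forall_of_atTop
  refine ⟨τ, fun x hx t ht => ?_⟩
  calc ‖T t x‖₊ ≤ β ‖x‖₊ t := hβb t x
    _ ≤ β r t := (hβK t).2.1.monotone hx
    _ ≤ β r τ := hanti.antitone ht
    _ ≤ ε := (hτ τ le_rfl).le

lemma st_54 {X : Type*} [NormedAddCommGroup X] [NormedSpace ℝ X]
    (T : ℝ≥0 → X →L[ℝ] X)
    (hT0 : T 0 = ContinuousLinearMap.id ℝ X)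
    (hTadd : ∀ t s : ℝ≥0, T (t + s) = (T t).comp (T s))
    (hTcont : ∀ x : X, Continuous fun t : ℝ≥0 => T t x)
    (h5 : ∃ V : X → ℝ, Continuous V ∧ V 0 = 0 ∧ (∀ x : X, 0 ≤ V x) ∧
        (∃ ψ₂ : ℝ≥0 → ℝ≥0, ClassKinf ψ₂ ∧
          ∀ x : X, x ≠ 0 → 0 < V x ∧ V x ≤ (ψ₂ ‖x‖₊ : ℝ)) ∧
        (∃ α : ℝ≥0 → ℝ≥0, ClassK α ∧ ∀ x : X, x ≠ 0 →
          Filter.liminf (fun t : ℝ≥0 => (V (T t x) - V x) / (t : ℝ))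
            (𝓝[>] (0 : ℝ≥0)) ≤ -(α ‖x‖₊ : ℝ))) :
    ∀ ε : ℝ≥0, 0 < ε → ∀ r : ℝ≥0, 0 < r → ∃ τ : ℝ≥0,
        ∀ x : X, ‖x‖₊ ≤ r → ∃ t ≤ τ, ‖T t x‖₊ ≤ ε := by
  obtain ⟨V, hVc, hV00, hVnn, ⟨ψ₂, hψ, hψb⟩, ⟨α, hα, hαb⟩⟩ := h5
  intro ε hε r hr
  have hαε : (0:ℝ) < (α ε : ℝ) := by
    have h1 : α 0 < α ε := hα.2.1 hε
    rw [hα.2.2] at h1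
    exact_mod_cast h1
  set c : ℝ := (α ε : ℝ) with hcdef
  set τ : ℝ≥0 := (ψ₂ r) / (α ε) + 1 with hτdef
  refine ⟨τ, fun x hx => ?_⟩
  by_contra hcon
  push_neg at hcon
  have hx0 : x ≠ 0 := by
    intro h0
    have h1 := hcon 0 zero_le
    rw [h0] at h1
    simp [hT0] at h1
  set G : ℝ → ℝ := fun u => V (T u.toNNReal x) with hG
  have hGc : Continuous G := hVc.comp ((hTcont x).comp continuous_real_toNNReal)
  have bound : ∀ u ∈ Set.Ico (0:ℝ) (τ:ℝ), ∀ rr : ℝ, -c < rr →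
      ∃ᶠ z in 𝓝[>] u, slope G u z < rr := by
    intro u hu rr hrr
    set y := T u.toNNReal x with hy
    have huτ : u.toNNReal ≤ τ := by
      rw [← Real.toNNReal_coe (r := τ)]
      exact Real.toNNReal_le_toNNReal hu.2.le
    have hyε : ε < ‖y‖₊ := hcon _ huτ
    have hy0 : y ≠ 0 := by
      intro h
      rw [h] at hyε
      simp at hyε
    have hL := hαb y hy0
    have hcle : -((α ‖y‖₊ : ℝ≥0) : ℝ) ≤ -c := by
      have h1 : α ε ≤ α ‖y‖₊ := hα.2.1.monotone hyε.le
      have h2 : (c:ℝ) ≤ ((α ‖y‖₊ : ℝ≥0) : ℝ) := by exact_mod_cast h1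
      linarith
    have hL2 := hL.trans hcle
    have hcob := cobound_of_liminf_le (by linarith : -c < 0) hL2
    have hfreq := Filter.frequently_lt_of_liminf_lt hcob (lt_of_le_of_lt hL2 hrr)
    have hmap : Filter.Tendsto (fun h : ℝ≥0 => u + (h:ℝ)) (𝓝[>] (0:ℝ≥0)) (𝓝[>] u) := by
      refine tendsto_nhdsWithin_iff.mpr ⟨?_, ?_⟩
      · have h1 : Filter.Tendsto (fun h : ℝ≥0 => (h:ℝ)) (𝓝 (0:ℝ≥0)) (𝓝 (0:ℝ)) :=
          (NNReal.continuous_coe.tendsto 0)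
        have h2 := tendsto_const_nhds (x := u) (f := 𝓝[>] (0:ℝ≥0)) |>.add
          (h1.mono_left nhdsWithin_le_nhds)
        simpa using h2
      · filter_upwards [self_mem_nhdsWithin] with h hh
        have : (0:ℝ) < (h:ℝ) := by exact_mod_cast hh
        exact Set.mem_Ioi.mpr (by linarith)
    have key : ∀ h : ℝ≥0, 0 < h → slope G u (u + (h:ℝ)) = (V (T h y) - V y) / (h:ℝ) := by
      intro h hh
      have h1 : (u + (h:ℝ)).toNNReal = u.toNNReal + h := by
        rw [Real.toNNReal_add hu.1 h.coe_nonneg, Real.toNNReal_coe]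
      have h2 : T (u.toNNReal + h) x = T h y := by
        rw [add_comm, hTadd]; rfl
      rw [slope_def_field]
      rw [show u + (h:ℝ) - u = (h:ℝ) by ring]
      simp only [hG, h1, h2, hy]
    have hfr2 : ∃ᶠ h : ℝ≥0 in 𝓝[>] 0, slope G u (u + (h:ℝ)) < rr := by
      have hev : ∀ᶠ h : ℝ≥0 in 𝓝[>] 0,
          ((V (T h y) - V y) / (h:ℝ) < rr → slope G u (u + (h:ℝ)) < rr) := by
        filter_upwards [self_mem_nhdsWithin] with h hh hlt
        rwa [key h hh]
      exact hfreq.mp hev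
    have hfr3 : ∃ᶠ z in Filter.map (fun h : ℝ≥0 => u + (h:ℝ)) (𝓝[>] (0:ℝ≥0)),
        slope G u z < rr := Filter.frequently_map.mpr hfr2
    exact hfr3.filter_mono hmap
  have hB' : ∀ u ∈ Set.Ico (0:ℝ) (τ:ℝ),
      HasDerivWithinAt (fun u : ℝ => V x + (-c) * u) (-c) (Set.Ici u) u := by
    intro u _
    have h1 : HasDerivAt (fun u : ℝ => V x + (-c) * u) (-c) u := by
      simpa using ((hasDerivAt_id u).const_mul (-c)).const_add (V x)
    exact h1.hasDerivWithinAt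
  have hG0 : G 0 ≤ V x + (-c) * 0 := by
    simp [hG, Real.toNNReal_zero, hT0]
  have happ := image_le_of_liminf_slope_right_le_deriv_boundary
    (hGc.continuousOn) hG0
    ((continuous_const.add (continuous_const.mul continuous_id)).continuousOn) hB' bound
    (Set.mem_Icc.mpr ⟨τ.coe_nonneg, le_rfl⟩)
  -- happ : G τ ≤ V x + (-c) * τ
  have hGτ : (0:ℝ) ≤ G (τ:ℝ) := hVnn _
  have hVx : V x ≤ ((ψ₂ r : ℝ≥0) : ℝ) := by
    refine (hψb x hx0).2.trans ?_
    exact_mod_cast hψ.1.2.1.monotone hx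
  have hτR : ((τ:ℝ≥0):ℝ) = ((ψ₂ r : ℝ≥0):ℝ) / c + 1 := by
    rw [hτdef]
    push_cast
    rfl
  simp only [Pi.add_apply, Pi.mul_apply, id] at happ
  have hdiv : c * (((ψ₂ r : ℝ≥0):ℝ) / c) = ((ψ₂ r : ℝ≥0):ℝ) := by
    field_simp
  have hct : c * ((τ:ℝ≥0):ℝ) = ((ψ₂ r : ℝ≥0):ℝ) + c := by
    rw [hτR, mul_add, hdiv, mul_one]
  nlinarith [happ, hGτ, hVx, hαε, hct]

open MeasureTheory in
set_option maxHeartbeats 1000000 in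
lemma st_15 {X : Type*} [NormedAddCommGroup X] [NormedSpace ℝ X]
    (T : ℝ≥0 → X →L[ℝ] X)
    (hT0 : T 0 = ContinuousLinearMap.id ℝ X)
    (hTadd : ∀ t s : ℝ≥0, T (t + s) = (T t).comp (T s))
    (hTcont : ∀ x : X, Continuous fun t : ℝ≥0 => T t x)
    (h1 : ∃ M ω : ℝ, 0 < M ∧ 0 < ω ∧
        ∀ (t : ℝ≥0) (x : X), ‖T t x‖ ≤ M * Real.exp (-ω * (t : ℝ)) * ‖x‖) :
    ∃ V : X → ℝ, Continuous V ∧ V 0 = 0 ∧ (∀ x : X, 0 ≤ V x) ∧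
        (∃ ψ₂ : ℝ≥0 → ℝ≥0, ClassKinf ψ₂ ∧
          ∀ x : X, x ≠ 0 → 0 < V x ∧ V x ≤ (ψ₂ ‖x‖₊ : ℝ)) ∧
        (∃ α : ℝ≥0 → ℝ≥0, ClassK α ∧ ∀ x : X, x ≠ 0 →
          Filter.liminf (fun t : ℝ≥0 => (V (T t x) - V x) / (t : ℝ))
            (𝓝[>] (0 : ℝ≥0)) ≤ -(α ‖x‖₊ : ℝ)) := by
  obtain ⟨M, ω, hM, hω, hb⟩ := h1
  set δ : ℝ := ω/2 with hδdef
  have hδ : 0 < δ := by positivity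
  have hMg : ∀ (t : ℝ≥0) (z : X), ‖T t z‖ ≤ M * ‖z‖ := by
    intro t z
    refine (hb t z).trans ?_
    have h1 : Real.exp (-ω * (t:ℝ)) ≤ 1 :=
      Real.exp_le_one_iff.mpr (by nlinarith [t.coe_nonneg])
    nlinarith [mul_le_mul_of_nonneg_left h1 (mul_nonneg hM.le (norm_nonneg z)),
      mul_nonneg hM.le (norm_nonneg z)]
  set F : X → ℝ → ℝ := fun z t => Real.exp (δ*t) * ‖T t.toNNReal z‖ with hF
  have hFc : ∀ z, Continuous (F z) := fun z =>
    (Real.continuous_exp.comp (continuous_const.mul continuous_id)).mul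
      ((continuous_norm.comp (hTcont z)).comp continuous_real_toNNReal)
  have hFnn : ∀ z t, 0 ≤ F z t := fun z t =>
    mul_nonneg (Real.exp_pos _).le (norm_nonneg _)
  have hFle : ∀ z, ∀ t ∈ Set.Ioi (0:ℝ), F z t ≤ (M*‖z‖) * Real.exp (-δ*t) := by
    intro z t ht
    have htnn : ((t.toNNReal : ℝ≥0):ℝ) = t := Real.coe_toNNReal t (le_of_lt ht)
    have h2 := hb t.toNNReal z
    rw [htnn] at h2
    calc F z t = Real.exp (δ*t) * ‖T t.toNNReal z‖ := rfl
      _ ≤ Real.exp (δ*t) * (M * Real.exp (-ω*t) * ‖z‖) :=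
          mul_le_mul_of_nonneg_left h2 (Real.exp_pos _).le
      _ = (M*‖z‖) * Real.exp (-δ*t) := by
          rw [show Real.exp (δ*t) * (M * Real.exp (-ω*t) * ‖z‖)
              = (M*‖z‖)*(Real.exp (δ*t) * Real.exp (-ω*t)) from by ring,
            ← Real.exp_add, show δ*t + -ω*t = -δ*t from by rw [hδdef]; ring]
  have hgint : ∀ c : ℝ, IntegrableOn (fun t => c * Real.exp (-δ*t)) (Set.Ioi (0:ℝ)) volume := by
    intro c
    show Integrable (fun t => c * Real.exp (-δ*t)) (volume.restrict (Set.Ioi 0))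
    simpa using ((exp_neg_integrableOn_Ioi 0 hδ).const_mul c)
  have hint : ∀ z, IntegrableOn (F z) (Set.Ioi (0:ℝ)) volume := by
    intro z
    apply MeasureTheory.Integrable.mono' (hgint (M*‖z‖)) ((hFc z).aestronglyMeasurable.restrict)
    rw [MeasureTheory.ae_restrict_iff' measurableSet_Ioi]
    apply Filter.Eventually.of_forall
    intro t ht
    rw [Real.norm_eq_abs, abs_of_nonneg (hFnn z t)]
    exact hFle z t ht
  set V : X → ℝ := fun z => ∫ t in Set.Ioi (0:ℝ), F z t with hV
  set I0 : ℝ := ∫ t in Set.Ioi (0:ℝ), Real.exp (-δ*t) with hI0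
  have hI0nn : 0 ≤ I0 := MeasureTheory.integral_nonneg (fun t => (Real.exp_pos _).le)
  have hVnn : ∀ z, 0 ≤ V z := fun z => MeasureTheory.integral_nonneg (fun t => hFnn z t)
  have hVle : ∀ z, V z ≤ (M*I0) * ‖z‖ := by
    intro z
    have h1 : V z ≤ ∫ t in Set.Ioi (0:ℝ), (M*‖z‖) * Real.exp (-δ*t) :=
      MeasureTheory.setIntegral_mono_on (hint z) (hgint (M*‖z‖)) measurableSet_Ioi
        (fun t ht => hFle z t ht)
    rw [MeasureTheory.integral_const_mul] at h1
    calc V z ≤ (M*‖z‖) * I0 := h1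
      _ = (M*I0) * ‖z‖ := by ring
  have hVsub : ∀ z w, V z - V w ≤ V (z - w) := by
    intro z w
    have h1 : ∀ t ∈ Set.Ioi (0:ℝ), F z t ≤ F w t + F (z-w) t := by
      intro t ht
      have hz : T t.toNNReal z = T t.toNNReal w + T t.toNNReal (z - w) := by
        rw [← map_add]
        congr 1
        abel
      have h2 : ‖T t.toNNReal z‖ ≤ ‖T t.toNNReal w‖ + ‖T t.toNNReal (z-w)‖ := by
        rw [hz]; exact norm_add_le _ _
      have h3 := mul_le_mul_of_nonneg_left h2 (Real.exp_pos (δ*t)).le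
      calc F z t ≤ Real.exp (δ*t) * (‖T t.toNNReal w‖ + ‖T t.toNNReal (z-w)‖) := h3
        _ = F w t + F (z-w) t := by simp only [hF]; ring
    have h2 : V z ≤ V w + V (z-w) := by
      have h3 := MeasureTheory.setIntegral_mono_on (hint z)
        (((hint w).add (hint (z-w)))) measurableSet_Ioi h1
      simp only [Pi.add_apply] at h3
      rwa [MeasureTheory.integral_add (hint w) (hint (z-w))] at h3
    linarith
  have hVcont : Continuous V := by
    have hlip : LipschitzWith (M*I0).toNNReal V := by
      apply LipschitzWith.of_dist_le_mul
      intro z w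
      rw [Real.dist_eq, dist_eq_norm]
      have h1 : |V z - V w| ≤ (M*I0) * ‖z - w‖ := by
        rw [abs_sub_le_iff]
        constructor
        · linarith [hVsub z w, hVle (z-w)]
        · have h2 := hVle (w-z)
          rw [norm_sub_rev] at h2
          linarith [hVsub w z]
      refine h1.trans (mul_le_mul_of_nonneg_right ?_ (norm_nonneg _))
      exact Real.le_coe_toNNReal _
    exact hlip.continuous
  have hV0 : V 0 = 0 := by
    have h1 : ∀ t : ℝ, F 0 t = 0 := fun t => by simp [hF]
    simp only [hV]
    rw [show (fun t => F (0:X) t) = fun _ : ℝ => (0:ℝ) from funext h1]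
    simp
  have hs₀ : ∀ z : X, z ≠ 0 → ∃ s₀ : ℝ, 0 < s₀ ∧
      ∀ t : ℝ, 0 ≤ t → t ≤ s₀ → ‖z‖/2 ≤ ‖T t.toNNReal z‖ := by
    intro z hz
    have hzn : 0 < ‖z‖ := norm_pos_iff.mpr hz
    have hgc : Continuous (fun t : ℝ => ‖T t.toNNReal z‖) :=
      (continuous_norm.comp (hTcont z)).comp continuous_real_toNNReal
    have hopen : IsOpen {t : ℝ | ‖z‖/2 < ‖T t.toNNReal z‖} :=
      isOpen_lt continuous_const hgc
    have hmem : (0:ℝ) ∈ {t : ℝ | ‖z‖/2 < ‖T t.toNNReal z‖} := by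
      simp only [Set.mem_setOf_eq, Real.toNNReal_zero, hT0,
        ContinuousLinearMap.id_apply]
      linarith
    obtain ⟨ε, hε, hball⟩ := Metric.isOpen_iff.mp hopen 0 hmem
    refine ⟨ε/2, by positivity, fun t ht1 ht2 => ?_⟩
    have hmemb : t ∈ Metric.ball (0:ℝ) ε := by
      rw [Metric.mem_ball, Real.dist_eq, sub_zero, abs_of_nonneg ht1]
      linarith
    exact (hball hmemb).le
  have hJlow : ∀ z : X, ∀ s₀ : ℝ, 0 < s₀ →
      (∀ t : ℝ, 0 ≤ t → t ≤ s₀ → ‖z‖/2 ≤ ‖T t.toNNReal z‖) →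
      ∀ s : ℝ, 0 < s → s ≤ s₀ → s * (‖z‖/2) ≤ ∫ t in Set.Ioc (0:ℝ) s, F z t := by
    intro z s₀ hs₀p hs₀b s hsp hss
    have h1 : ∫ t in Set.Ioc (0:ℝ) s, (‖z‖/2) ≤ ∫ t in Set.Ioc (0:ℝ) s, F z t := by
      apply MeasureTheory.setIntegral_mono_on
        (MeasureTheory.integrableOn_const measure_Ioc_lt_top.ne)
        ((hint z).mono_set Set.Ioc_subset_Ioi_self) measurableSet_Ioc
      intro t ht
      calc ‖z‖/2 ≤ ‖T t.toNNReal z‖ := hs₀b t ht.1.le (ht.2.trans hss)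
        _ = 1 * ‖T t.toNNReal z‖ := (one_mul _).symm
        _ ≤ Real.exp (δ*t) * ‖T t.toNNReal z‖ :=
            mul_le_mul_of_nonneg_right
              (Real.one_le_exp (mul_nonneg hδ.le ht.1.le)) (norm_nonneg _)
    have h3 : ∫ _t in Set.Ioc (0:ℝ) s, (‖z‖/2 : ℝ) = s * (‖z‖/2) := by
      rw [MeasureTheory.setIntegral_const, Real.volume_real_Ioc_of_le hsp.le, smul_eq_mul]
      ring
    linarith
  have hVpos : ∀ z, z ≠ 0 → 0 < V z := by
    intro z hz
    obtain ⟨s₀, hs₀p, hs₀b⟩ := hs₀ z hz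
    have hzn : 0 < ‖z‖ := norm_pos_iff.mpr hz
    have h1 := hJlow z s₀ hs₀p hs₀b s₀ hs₀p le_rfl
    have h2 : ∫ t in Set.Ioc (0:ℝ) s₀, F z t ≤ V z := by
      apply MeasureTheory.setIntegral_mono_set (hint z)
        (Filter.Eventually.of_forall (hFnn z))
        (Filter.Eventually.of_forall (fun t ht => Set.Ioc_subset_Ioi_self ht))
    nlinarith
  -- the shift identity
  have hshift : ∀ (z : X) (s : ℝ≥0), 0 < s →
      V (T s z) = Real.exp (-δ*(s:ℝ)) * (V z - ∫ t in Set.Ioc (0:ℝ) (s:ℝ), F z t) := by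
    intro z s hs
    have hsR : (0:ℝ) < (s:ℝ) := hs
    have h1 : ∀ t ∈ Set.Ioi (0:ℝ), F (T s z) t = Real.exp (-δ*(s:ℝ)) * F z (t + (s:ℝ)) := by
      intro t ht
      have hadd : ((t + (s:ℝ)).toNNReal) = t.toNNReal + s := by
        rw [Real.toNNReal_add (le_of_lt ht) s.coe_nonneg, Real.toNNReal_coe]
      have hco : T t.toNNReal (T s z) = T (t.toNNReal + s) z := by
        rw [hTadd]; rfl
      show Real.exp (δ*t) * ‖T t.toNNReal (T s z)‖
          = Real.exp (-δ*(s:ℝ)) * (Real.exp (δ*(t + (s:ℝ))) * ‖T (t + (s:ℝ)).toNNReal z‖)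
      rw [hco, hadd,
        show Real.exp (-δ*(s:ℝ)) * (Real.exp (δ*(t + (s:ℝ))) * ‖T (t.toNNReal + s) z‖)
          = (Real.exp (-δ*(s:ℝ)) * Real.exp (δ*(t + (s:ℝ)))) * ‖T (t.toNNReal + s) z‖ from by
            ring,
        ← Real.exp_add, show -δ*(s:ℝ) + δ*(t + (s:ℝ)) = δ*t from by ring]
    have h2 : V (T s z) = ∫ t in Set.Ioi (0:ℝ), Real.exp (-δ*(s:ℝ)) * F z (t + (s:ℝ)) :=
      MeasureTheory.setIntegral_congr_fun measurableSet_Ioi h1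
    have h3 : ∫ t in Set.Ioi (0:ℝ), Real.exp (-δ*(s:ℝ)) * F z (t + (s:ℝ))
        = Real.exp (-δ*(s:ℝ)) * ∫ t in Set.Ioi (0:ℝ), F z (t + (s:ℝ)) :=
      MeasureTheory.integral_const_mul _ _
    have h4 : ∫ t in Set.Ioi (0:ℝ), F z (t + (s:ℝ)) = ∫ u in Set.Ioi ((s:ℝ)), F z u := by
      have hpre : (fun t : ℝ => t + (s:ℝ)) ⁻¹' (Set.Ioi (s:ℝ)) = Set.Ioi 0 := by
        ext t
        simp only [Set.mem_preimage, Set.mem_Ioi]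
        constructor <;> intro <;> linarith
      have h5 := (measurePreserving_add_right volume ((s:ℝ))).setIntegral_preimage_emb
        (MeasurableEquiv.addRight ((s:ℝ))).measurableEmbedding (F z) (Set.Ioi ((s:ℝ)))
      rw [hpre] at h5
      exact h5
    have h5 : ∫ u in Set.Ioi ((s:ℝ)), F z u = V z - ∫ t in Set.Ioc (0:ℝ) (s:ℝ), F z t := by
      have hu : Set.Ioc (0:ℝ) (s:ℝ) ∪ Set.Ioi ((s:ℝ)) = Set.Ioi 0 :=
        Set.Ioc_union_Ioi_eq_Ioi (le_of_lt hsR)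
      have hd : Disjoint (Set.Ioc (0:ℝ) (s:ℝ)) (Set.Ioi ((s:ℝ))) :=
        Set.Ioc_disjoint_Ioi le_rfl
      have h6 := MeasureTheory.setIntegral_union hd measurableSet_Ioi
        ((hint z).mono_set Set.Ioc_subset_Ioi_self)
        ((hint z).mono_set (Set.Ioi_subset_Ioi (le_of_lt hsR)))
      rw [hu] at h6
      have : V z = (∫ t in Set.Ioc (0:ℝ) (s:ℝ), F z t) + ∫ u in Set.Ioi ((s:ℝ)), F z u := h6
      linarith
    rw [h2, h3, h4, h5]
  -- assemble
  set K₂ : ℝ≥0 := (M*I0).toNNReal + 1 with hK₂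
  have hK₂pos : 0 < K₂ := by positivity
  have hK₂ne : K₂ ≠ 0 := hK₂pos.ne'
  refine ⟨V, hVcont, hV0, hVnn, ⟨fun ρ => K₂ * ρ, ⟨⟨?_, ?_, by simp⟩, ?_⟩, ?_⟩, ?_⟩
  · exact continuous_const.mul continuous_id
  · exact fun a b h => mul_lt_mul_of_pos_left h hK₂pos
  · intro Mb
    refine ⟨Mb/K₂ + 1, ?_⟩
    show Mb < K₂ * (Mb/K₂ + 1)
    rw [mul_add, mul_one, mul_comm K₂ (Mb/K₂), div_mul_cancel₀ _ hK₂ne]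
    exact lt_add_of_pos_right _ hK₂pos
  · intro z hz
    refine ⟨hVpos z hz, ?_⟩
    have h1 : ((K₂ * ‖z‖₊ : ℝ≥0) : ℝ) = (K₂:ℝ) * ‖z‖ := by push_cast; ring
    rw [h1]
    refine (hVle z).trans (mul_le_mul_of_nonneg_right ?_ (norm_nonneg _))
    rw [hK₂]
    push_cast
    linarith [Real.le_coe_toNNReal (M*I0)]
  · refine ⟨fun ρ => ρ/4, ⟨?_, ?_, by simp⟩, ?_⟩
    · simp only [div_eq_mul_inv]
      exact continuous_id.mul continuous_const
    · intro a b h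
      simp only [div_eq_mul_inv]
      exact mul_lt_mul_of_pos_right h (by norm_num)
    · intro x hx
      obtain ⟨s₀, hs₀p, hs₀b⟩ := hs₀ x hx
      have hxn : 0 < ‖x‖ := norm_pos_iff.mpr hx
      set s₂ : ℝ := min s₀ (min 1 (1/(2*δ))) with hs₂
      have hs₂p : 0 < s₂ := by
        apply lt_min hs₀p
        apply lt_min one_pos
        positivity
      have hs₂1 : s₂ ≤ 1 := (min_le_right _ _).trans (min_le_left _ _)
      have hs₂δ : s₂ ≤ 1/(2*δ) := (min_le_right _ _).trans (min_le_right _ _)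
      have hs₂0 : s₂ ≤ s₀ := min_le_left _ _
      have hJnn : ∀ s : ℝ≥0, 0 ≤ ∫ t in Set.Ioc (0:ℝ) (s:ℝ), F x t :=
        fun s => MeasureTheory.integral_nonneg (fun t => hFnn x t)
      have hJub : ∀ s : ℝ≥0, 0 < s → (s:ℝ) ≤ s₂ →
          (∫ t in Set.Ioc (0:ℝ) (s:ℝ), F x t) ≤ (s:ℝ) * (Real.exp δ * (M*‖x‖)) := by
        intro s hsp hs2
        have h1 : ∫ t in Set.Ioc (0:ℝ) (s:ℝ), F x t
            ≤ ∫ _t in Set.Ioc (0:ℝ) (s:ℝ), (Real.exp δ * (M*‖x‖)) := by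
          apply MeasureTheory.setIntegral_mono_on
            ((hint x).mono_set Set.Ioc_subset_Ioi_self)
            (MeasureTheory.integrableOn_const measure_Ioc_lt_top.ne)
            measurableSet_Ioc
          intro t ht
          have h2 : Real.exp (δ*t) ≤ Real.exp δ := by
            apply Real.exp_le_exp.mpr
            nlinarith [ht.1.le, ht.2, hs2, hs₂1]
          have h3 : ‖T t.toNNReal x‖ ≤ M*‖x‖ := hMg _ _
          calc F x t = Real.exp (δ*t) * ‖T t.toNNReal x‖ := rfl
            _ ≤ Real.exp δ * (M*‖x‖) := by
                apply mul_le_mul h2 h3 (norm_nonneg _) (Real.exp_pos _).le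
        have h4 : ∫ _t in Set.Ioc (0:ℝ) (s:ℝ), (Real.exp δ * (M*‖x‖) : ℝ)
            = (s:ℝ) * (Real.exp δ * (M*‖x‖)) := by
          rw [MeasureTheory.setIntegral_const, Real.volume_real_Ioc_of_le s.coe_nonneg, smul_eq_mul]
          ring
        linarith
      have hupper : ∀ s : ℝ≥0, 0 < s → (s:ℝ) ≤ s₂ →
          (V (T s x) - V x)/(s:ℝ) ≤ -(‖x‖/4) := by
        intro s hsp hs2
        have hsR : (0:ℝ) < (s:ℝ) := hsp
        have hk := hshift x s hsp
        have hJ := hJlow x s₀ hs₀p hs₀b (s:ℝ) hsR (hs2.trans hs₂0)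
        have he1 : Real.exp (-δ*(s:ℝ)) ≤ 1 :=
          Real.exp_le_one_iff.mpr (by nlinarith [mul_nonneg hδ.le s.coe_nonneg])
        have he2 : (1:ℝ)/2 ≤ Real.exp (-δ*(s:ℝ)) := by
          have h5 := Real.add_one_le_exp (-δ*(s:ℝ))
          have h6 : δ*(s:ℝ) ≤ 1/2 := by
            have h7 : (s:ℝ) ≤ 1/(2*δ) := hs2.trans hs₂δ
            have h8 : δ*(s:ℝ) ≤ δ*(1/(2*δ)) := mul_le_mul_of_nonneg_left h7 hδ.le
            have h9 : δ*(1/(2*δ)) = 1/2 := by field_simp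
            linarith
          linarith
        have hnum : V (T s x) - V x ≤ -(‖x‖/4) * (s:ℝ) := by
          rw [hk]
          nlinarith [hVnn x, hJ, he1, he2, hJnn s, (Real.exp_pos (-δ*(s:ℝ))).le]
        rw [div_le_iff₀ hsR]
        linarith
      have hlower : ∀ s : ℝ≥0, 0 < s → (s:ℝ) ≤ s₂ →
          -(δ * V x + Real.exp δ * (M*‖x‖)) ≤ (V (T s x) - V x)/(s:ℝ) := by
        intro s hsp hs2
        have hsR : (0:ℝ) < (s:ℝ) := hsp
        have hk := hshift x s hsp
        have hJu := hJub s hsp hs2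
        have hJn := hJnn s
        have he3 : 1 - δ*(s:ℝ) ≤ Real.exp (-δ*(s:ℝ)) := by
          have h5 := Real.add_one_le_exp (-δ*(s:ℝ))
          linarith
        have he1 : Real.exp (-δ*(s:ℝ)) ≤ 1 :=
          Real.exp_le_one_iff.mpr (by nlinarith [mul_nonneg hδ.le s.coe_nonneg])
        rw [le_div_iff₀ hsR, hk]
        nlinarith [hVnn x, mul_le_mul_of_nonneg_right he3 (hVnn x),
          mul_le_mul_of_nonneg_right he1 hJn]
      have hev : ∀ᶠ s : ℝ≥0 in 𝓝[>] 0, (0 < s ∧ (s:ℝ) ≤ s₂) := by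
        have h1 : ∀ᶠ s : ℝ≥0 in 𝓝[>] 0, s < s₂.toNNReal := by
          apply Filter.Eventually.filter_mono nhdsWithin_le_nhds
          exact Filter.eventually_of_mem
            (Iio_mem_nhds (Real.toNNReal_pos.mpr hs₂p)) (fun y hy => hy)
        filter_upwards [h1, self_mem_nhdsWithin] with s hs1 hs2'
        refine ⟨hs2', ?_⟩
        have h2 : (s:ℝ) < ((s₂.toNNReal : ℝ≥0):ℝ) := by exact_mod_cast hs1
        rw [Real.coe_toNNReal _ hs₂p.le] at h2
        exact h2.le
      have hub_ev : ∀ᶠ s : ℝ≥0 in 𝓝[>] 0,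
          (V (T s x) - V x)/(s:ℝ) ≤ -(‖x‖/4) :=
        hev.mono fun s hs => hupper s hs.1 hs.2
      have hlb_ev : ∀ᶠ s : ℝ≥0 in 𝓝[>] 0,
          -(δ*V x + Real.exp δ*(M*‖x‖)) ≤ (V (T s x) - V x)/(s:ℝ) :=
        hev.mono fun s hs => hlower s hs.1 hs.2
      have hfinal : Filter.liminf (fun t : ℝ≥0 => (V (T t x) - V x) / (t:ℝ))
          (𝓝[>] (0:ℝ≥0)) ≤ -(‖x‖/4) := by
        rw [Filter.liminf_eq]
        refine csSup_le ⟨_, hlb_ev⟩ fun a ha => ?_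
        have ha' : ∀ᶠ n : ℝ≥0 in 𝓝[>] 0, a ≤ (V (T n x) - V x)/(n:ℝ) := ha
        obtain ⟨s, has, hus⟩ := (ha'.and hub_ev).exists
        linarith
      have hc4 : -((‖x‖₊/4 : ℝ≥0) : ℝ) = -(‖x‖/4) := by push_cast; ring
      exact hfinal.trans (le_of_eq hc4.symm)

/-- criteria for exponential stability of a strongly continuous
semigroup of bounded linear operators on a Banach space. -/
theorem stmt19 {X : Type*} [NormedAddCommGroup X] [NormedSpace ℝ X] [CompleteSpace X]
    (T : ℝ≥0 → X →L[ℝ] X)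
    (hT0 : T 0 = ContinuousLinearMap.id ℝ X)
    (hTadd : ∀ t s : ℝ≥0, T (t + s) = (T t).comp (T s))
    (hTcont : ∀ x : X, Continuous fun t : ℝ≥0 => T t x) :
    [ (∃ M ω : ℝ, 0 < M ∧ 0 < ω ∧
        ∀ (t : ℝ≥0) (x : X), ‖T t x‖ ≤ M * Real.exp (-ω * (t : ℝ)) * ‖x‖),
      (∃ β : ℝ≥0 → ℝ≥0 → ℝ≥0, ClassKL β ∧
        ∀ (t : ℝ≥0) (x : X), ‖T t x‖₊ ≤ β ‖x‖₊ t),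
      (∀ ε : ℝ≥0, 0 < ε → ∀ r : ℝ≥0, 0 < r → ∃ τ : ℝ≥0,
        ∀ x : X, ‖x‖₊ ≤ r → ∀ t : ℝ≥0, τ ≤ t → ‖T t x‖₊ ≤ ε),
      (∀ ε : ℝ≥0, 0 < ε → ∀ r : ℝ≥0, 0 < r → ∃ τ : ℝ≥0,
        ∀ x : X, ‖x‖₊ ≤ r → ∃ t ≤ τ, ‖T t x‖₊ ≤ ε),
      (∃ V : X → ℝ, Continuous V ∧ V 0 = 0 ∧ (∀ x : X, 0 ≤ V x) ∧
        (∃ ψ₂ : ℝ≥0 → ℝ≥0, ClassKinf ψ₂ ∧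
          ∀ x : X, x ≠ 0 → 0 < V x ∧ V x ≤ (ψ₂ ‖x‖₊ : ℝ)) ∧
        (∃ α : ℝ≥0 → ℝ≥0, ClassK α ∧ ∀ x : X, x ≠ 0 →
          Filter.liminf (fun t : ℝ≥0 => (V (T t x) - V x) / (t : ℝ))
            (𝓝[>] (0 : ℝ≥0)) ≤ -(α ‖x‖₊ : ℝ))) ].TFAE := by
  tfae_have 1 → 2 := st_12 T
  tfae_have 2 → 3 := st_23 T
  tfae_have 3 → 4 := by
    intro h3 ε hε r hr
    obtain ⟨τ, hτ⟩ := h3 ε hε r hr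
    exact ⟨τ, fun x hx => ⟨τ, le_rfl, hτ x hx τ le_rfl⟩⟩
  tfae_have 4 → 1 := st_41 T hT0 hTadd hTcont
  tfae_have 1 → 5 := st_15 T hT0 hTadd hTcont
  tfae_have 5 → 4 := st_54 T hT0 hTadd hTcont
  tfae_finish
end
end
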